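/- arXiv:2409.10438 — 3 statements merged into one kernel-verified Lean document; each statement's English description precedes it below -/
import Mathlib

section
/- Let A be an abelian category with enough projectives and n a positive integer. The following are equivalent: (a) every projective object of A has dominant dimension at least n+1; (b) every object of projective dimension at most m has dominant dimension at least n+1−m, for all 0 ≤ m ≤ n; (c) every object of projective dimension at most n has dominant dimension at least 1. -/
open CategoryTheory CategoryTheory.Limits

namespace Paper


variable {A : Type*} [Category A] [Abelian A]

/-- `domdim X ≥ k`: there is an exact sequence `0 → X → Y₁ → ⋯ → Y_k` with all `Y_i`
projective and injective. -/
def DomdimGE (X : A) (k : ℕ) : Prop :=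
  ∃ T : ComposableArrows A k, T.obj' 0 (by omega) = X ∧
    (∀ (i : ℕ) (hi : i ≤ k), 1 ≤ i → Projective (T.obj' i hi) ∧ Injective (T.obj' i hi)) ∧
    T.Exact ∧ ∀ (h : 1 ≤ k), Mono (T.map' 0 1 (by omega) h)

/-- `pdim X ≤ d`: there is an exact sequence `0 → P_d → ⋯ → P_0 → X → 0` with all `P_i`
projective. -/
def PdimProjLE (X : A) (d : ℕ) : Prop :=
  ∃ T : ComposableArrows A (d+1), T.obj' (d+1) (by omega) = X ∧
    (∀ (i : ℕ) (hi : i ≤ d), Projective (T.obj' i (by omega))) ∧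
    T.Exact ∧ Mono (T.map' 0 1 (by omega) (by omega)) ∧
    Epi (T.map' d (d+1) (by omega) (by omega))

/-- The first homology of the complex `Hom(P'',H) → Hom(P,H) → Hom(P',H)` obtained by
applying `Hom(-,H)` to `P' ⟶ P ⟶ P''` vanishes. -/
def ExtVanishesAt {D : Type*} [Category D] [Preadditive D] {P' P P'' : D}
    (d1 : P' ⟶ P) (d0 : P ⟶ P'') (H : D) : Prop :=
  ∀ φ : P ⟶ H, d1 ≫ φ = 0 → ∃ ψ : P'' ⟶ H, d0 ≫ ψ = φ

/-- A partial projective resolution `P_m → ⋯ → P_0 → X` (length `m+1`, exact at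
`P_{m-1},…,P_0` and with `P_0 → X` epi). -/
def IsPartialProjResolution {m : ℕ} (R : ComposableArrows A (m+1)) (X : A) : Prop :=
  R.obj' (m+1) (by omega) = X ∧ (∀ (i : ℕ) (hi : i ≤ m), Projective (R.obj' i (by omega))) ∧
  R.Exact ∧ Epi (R.map' m (m+1) (by omega) (by omega))

end Paper

open Paper

namespace Stmt4

variable {A : Type*} [Category A] [Abelian A]

/-! ### Recursive characterisations -/

/-- recursive dominant dimension `≥ k` -/
def D : ℕ → A → Prop
  | 0, _ => True
  | k+1, X => ∃ (Y : A) (f : X ⟶ Y), Mono f ∧ Projective Y ∧ Injective Y ∧ D k (cokernel f)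

/-- `B`-headed projective resolutions, recursion from the `X` side -/
def RPd (B : A) : ℕ → A → Prop
  | 0, X => Nonempty (B ≅ X)
  | k+1, X => ∃ (P : A) (p : P ⟶ X), Epi p ∧ Projective P ∧ RPd B k (kernel p)

/-- `B`-headed projective resolutions, recursion from the `B` side -/
def GPd : A → ℕ → A → Prop
  | B, 0, X => Nonempty (B ≅ X)
  | B, k+1, X => ∃ (P : A) (f : B ⟶ P), Mono f ∧ Projective P ∧ GPd (cokernel f) k X

/-! ### Basic lemmas -/

lemma D_of_iso : ∀ (k : ℕ) {X X' : A}, (X ≅ X') → D k X → D k X'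
  | 0, _, _, _, _ => trivial
  | (k+1), X, X', e, ⟨Y, f, hm, hp, hi, hD⟩ => by
    haveI := hm
    exact ⟨Y, e.inv ≫ f, mono_comp _ _, hp, hi,
      D_of_iso k (cokernelEpiComp e.inv f).symm hD⟩

lemma D_le : ∀ (k j : ℕ), j ≤ k → ∀ {X : A}, D k X → D j X
  | _, 0, _, _, _ => trivial
  | (k+1), (j+1), h, X, ⟨Y, f, hm, hp, hi, hD⟩ =>
    ⟨Y, f, hm, hp, hi, D_le k j (by omega) hD⟩

lemma isZero_cokernel_of_epi {X Y : A} (f : X ⟶ Y) (hf : Epi f) : IsZero (cokernel f) := by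
  rw [IsZero.iff_id_eq_zero]
  haveI := hf
  rw [← cancel_epi (cokernel.π f), ← cancel_epi f]
  simp

lemma projective_of_isZero {X : A} (h : IsZero X) : Projective X where
  factors f e _ := ⟨0, by rw [zero_comp, h.eq_of_src f 0]⟩

lemma injective_of_isZero {X : A} (h : IsZero X) : Injective X where
  factors f e _ := ⟨0, by rw [comp_zero, h.eq_of_tgt f 0]⟩

lemma D_of_isZero : ∀ (k : ℕ) {X : A}, IsZero X → D k X
  | 0, _, _ => trivial
  | (k+1), X, h =>
    ⟨X, 𝟙 X, inferInstance, projective_of_isZero h, injective_of_isZero h,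
      D_of_isZero k (isZero_cokernel_of_epi _ inferInstance)⟩

lemma D_of_projective_injective (k : ℕ) {X : A} (hp : Projective X) (hi : Injective X) :
    D k X := by
  cases k with
  | zero => trivial
  | succ k => exact ⟨X, 𝟙 X, inferInstance, hp, hi,
      D_of_isZero k (isZero_cokernel_of_epi _ inferInstance)⟩

/-! ### Short complex helpers -/

lemma sc_exact_of_epi_comp' {W X Y Z : A} (e : W ⟶ X) [Epi e] {α : X ⟶ Y} {β : Y ⟶ Z}
    {w : α ≫ β = 0} (h : (ShortComplex.mk α β w).Exact) {γ : W ⟶ Y} (hγ : γ = e ≫ α)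
    {w' : γ ≫ β = 0} : (ShortComplex.mk γ β w').Exact := by
  subst hγ
  exact (ShortComplex.exact_iff_of_epi_of_isIso_of_mono
    (S₁ := ShortComplex.mk (e ≫ α) β w') (S₂ := ShortComplex.mk α β w)
    { τ₁ := e, τ₂ := 𝟙 _, τ₃ := 𝟙 _, comm₁₂ := by simp, comm₂₃ := by simp }).2 h

lemma sc_exact_cancel_epi {W X Y Z : A} (e : W ⟶ X) [Epi e] {α : X ⟶ Y} {β : Y ⟶ Z}
    {γ : W ⟶ Y} (hγ : γ = e ≫ α) {w : γ ≫ β = 0} (h : (ShortComplex.mk γ β w).Exact)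
    {w' : α ≫ β = 0} : (ShortComplex.mk α β w').Exact := by
  subst hγ
  exact (ShortComplex.exact_iff_of_epi_of_isIso_of_mono
    (S₁ := ShortComplex.mk (e ≫ α) β w) (S₂ := ShortComplex.mk α β w')
    { τ₁ := e, τ₂ := 𝟙 _, τ₃ := 𝟙 _, comm₁₂ := by simp, comm₂₃ := by simp }).1 h

lemma sc_exact_comp_mono {X Y Z Z' : A} {α : X ⟶ Y} {β : Y ⟶ Z} {w : α ≫ β = 0}
    (h : (ShortComplex.mk α β w).Exact) (m : Z ⟶ Z') [Mono m]
    {w' : α ≫ β ≫ m = 0} : (ShortComplex.mk α (β ≫ m) w').Exact := by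
  exact (ShortComplex.exact_iff_of_epi_of_isIso_of_mono
    (S₁ := ShortComplex.mk α β w) (S₂ := ShortComplex.mk α (β ≫ m) w')
    { τ₁ := 𝟙 _, τ₂ := 𝟙 _, τ₃ := m, comm₁₂ := by simp, comm₂₃ := by simp }).1 h

lemma mono_cokernelDesc {X Y Z : A} {f : X ⟶ Y} {g : Y ⟶ Z} (w : f ≫ g = 0)
    (h : (ShortComplex.mk f g w).Exact) : Mono (cokernel.desc f g w) := by
  rw [Preadditive.mono_iff_cancel_zero]
  intro T s hs
  obtain ⟨T₁, π₁, hπ₁, z, hz⟩ := surjective_up_to_refinements_of_epi (cokernel.π f) s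
  haveI := hπ₁
  have h2 : z ≫ g = 0 := by
    have := congrArg (· ≫ cokernel.desc f g w) hz
    simp only [Category.assoc, hs, comp_zero, cokernel.π_desc] at this
    exact this.symm
  obtain ⟨T₂, π₂, hπ₂, x, hx⟩ := h.exact_up_to_refinements z h2
  dsimp only [ShortComplex.mk] at hx
  haveI := hπ₂
  have h3 : (π₂ ≫ π₁) ≫ s = 0 := by
    simp only [Category.assoc, hz]
    rw [reassoc_of% hx, cokernel.condition, comp_zero]
  haveI : Epi (π₂ ≫ π₁) := epi_comp _ _
  exact (cancel_epi (π₂ ≫ π₁)).1 (by simpa using h3)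

open ComposableArrows in
lemma exact_precomp_of_sc {n : ℕ} (S : ComposableArrows A (n+1)) (hS : S.Exact) {W : A}
    (g : W ⟶ S.left) (w : g ≫ S.map' 0 1 = 0)
    (h : (ShortComplex.mk g (S.map' 0 1) w).Exact) :
    (S.precomp g).Exact :=
  exact_of_δ₀ h.exact_toComposableArrows hS

open ComposableArrows in
lemma exact_precomp_zero (S : ComposableArrows A 0) {W : A} (g : W ⟶ S.left) :
    (S.precomp g).Exact := exact₁ _

/-! ### Structural lemmas -/

/-- horseshoe-type lemma : `D k` is stable under extensions -/
lemma D_of_ses (k : ℕ) {X₁ X₂ X₃ : A} (f : X₁ ⟶ X₂) (g : X₂ ⟶ X₃) (w : f ≫ g = 0)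
    (hf : Mono f) (hg : Epi g) (hex : (ShortComplex.mk f g w).Exact)
    (h1 : D k X₁) (h3 : D k X₃) : D k X₂ := by
  induction k generalizing X₁ X₂ X₃ with
  | zero => trivial
  | succ k ih =>
    obtain ⟨Y₁, a, ha, hap, hai, hDa⟩ := h1
    obtain ⟨Y₃, b, hb, hbp, hbi, hDb⟩ := h3
    haveI := ha; haveI := hb; haveI := hf; haveI := hg; haveI := hai
    set h : X₂ ⟶ Y₁ := Injective.factorThru a f with hh_def
    have hfh : f ≫ h = a := Injective.comp_factorThru a f
    set e : X₂ ⟶ Y₁ ⊞ Y₃ := biprod.lift h (g ≫ b) with he_def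
    have hfe : f ≫ e = a ≫ biprod.inl := by
      apply biprod.hom_ext
      · simp [he_def, hfh]
      · simp [he_def, reassoc_of% w]
    have he : Mono e := by
      rw [Preadditive.mono_iff_cancel_zero]
      intro T t ht
      have h2 : t ≫ g = 0 := by
        have h2' : (t ≫ g) ≫ b = 0 := by
          have := congrArg (· ≫ biprod.snd) ht
          simpa [he_def] using this
        exact (cancel_mono b).1 (by simpa using h2')
      obtain ⟨T', π₁, hπ₁, x, hx⟩ := hex.exact_up_to_refinements t h2
      haveI := hπ₁
      have hth : t ≫ h = 0 := by
        have := congrArg (· ≫ biprod.fst) ht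
        simpa [he_def] using this
      have hx0 : x ≫ a = 0 := by
        calc x ≫ a = (x ≫ f) ≫ h := by rw [Category.assoc, hfh]
          _ = (π₁ ≫ t) ≫ h := by rw [hx]
          _ = 0 := by rw [Category.assoc, hth, comp_zero]
      have : x = 0 := (cancel_mono a).1 (by simpa using hx0)
      rw [this, zero_comp] at hx
      exact (cancel_epi π₁).1 (by simpa using hx)
    have hainl : a ≫ biprod.inl ≫ cokernel.π e = 0 := by
      rw [← Category.assoc, ← hfe, Category.assoc, cokernel.condition, comp_zero]
    set α : cokernel a ⟶ cokernel e :=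
      cokernel.desc a (biprod.inl ≫ cokernel.π e) hainl with hα_def
    set β : cokernel e ⟶ cokernel b :=
      cokernel.desc e (biprod.snd ≫ cokernel.π b)
        (by simp [he_def, cokernel.condition]) with hβ_def
    have hπα : cokernel.π a ≫ α = biprod.inl ≫ cokernel.π e := by simp [hα_def]
    have hπβ : cokernel.π e ≫ β = biprod.snd ≫ cokernel.π b := by simp [hβ_def]
    have hw : α ≫ β = 0 := by
      rw [← cancel_epi (cokernel.π a), reassoc_of% hπα, hπβ, comp_zero]
      simp
    have hα_mono : Mono α := by
      rw [Preadditive.mono_iff_cancel_zero]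
      intro T t ht
      obtain ⟨T₁, π₁, hπ₁, y, hy⟩ := surjective_up_to_refinements_of_epi (cokernel.π a) t
      haveI := hπ₁
      have h1 : (y ≫ biprod.inl) ≫ cokernel.π e = 0 := by
        have h1' := congrArg (· ≫ α) hy
        simp only [Category.assoc, ht, comp_zero, hπα] at h1'
        rw [Category.assoc]
        exact h1'.symm
      obtain ⟨T₂, π₂, hπ₂, x, hx⟩ := (ShortComplex.exact_cokernel e).exact_up_to_refinements
        (y ≫ biprod.inl) h1
      haveI := hπ₂
      have hxg : (x ≫ g) ≫ b = 0 := by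
        have := congrArg (· ≫ biprod.snd) hx
        simpa [he_def] using this.symm
      obtain ⟨T₃, π₃, hπ₃, u, hu⟩ := hex.exact_up_to_refinements x
        ((cancel_mono b).1 (by simpa using hxg))
      haveI := hπ₃
      have key : π₃ ≫ π₂ ≫ y = u ≫ a := by
        have h6 := congrArg (· ≫ biprod.fst) hx
        simp only [Category.assoc, biprod.inl_fst, Category.comp_id, he_def,
          biprod.lift_fst] at h6
        -- h6 : π₂ ≫ y = x ≫ h
        calc π₃ ≫ π₂ ≫ y = π₃ ≫ x ≫ h := by rw [h6]
          _ = (π₃ ≫ x) ≫ h := by simp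
          _ = (u ≫ f) ≫ h := by rw [hu]
          _ = u ≫ a := by rw [Category.assoc, hfh]
      have ht0 : (π₃ ≫ π₂ ≫ π₁) ≫ t = 0 := by
        simp only [Category.assoc, hy]
        rw [reassoc_of% key, cokernel.condition, comp_zero]
      haveI : Epi (π₃ ≫ π₂ ≫ π₁) := epi_comp _ _
      exact (cancel_epi (π₃ ≫ π₂ ≫ π₁)).1 (by simpa using ht0)
    have hβ_epi : Epi β := by
      have : Epi (biprod.snd ≫ cokernel.π b : Y₁ ⊞ Y₃ ⟶ _) := epi_comp _ _
      exact epi_of_epi_fac hπβ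
    have hexact : (ShortComplex.mk α β hw).Exact := by
      rw [ShortComplex.exact_iff_exact_up_to_refinements]
      intro T t ht
      dsimp only [ShortComplex.mk] at t ht ⊢
      obtain ⟨T₁, π₁, hπ₁, z, hz⟩ := surjective_up_to_refinements_of_epi (cokernel.π e) t
      haveI := hπ₁
      have h2 : (z ≫ biprod.snd) ≫ cokernel.π b = 0 := by
        have h2' := congrArg (· ≫ β) hz
        simp only [Category.assoc, ht, comp_zero, hπβ] at h2'
        rw [Category.assoc]
        exact h2'.symm
      obtain ⟨T₂, π₂, hπ₂, v, hv⟩ := (ShortComplex.exact_cokernel b).exact_up_to_refinements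
        (z ≫ biprod.snd) h2
      dsimp only [ShortComplex.mk] at hv
      haveI := hπ₂
      obtain ⟨T₃, π₃, hπ₃, u, hu⟩ := surjective_up_to_refinements_of_epi g v
      haveI := hπ₃
      set z' : T₃ ⟶ Y₁ ⊞ Y₃ := π₃ ≫ π₂ ≫ z - u ≫ e with hz'_def
      have hz'snd : z' ≫ biprod.snd = 0 := by
        have h3 := congrArg (π₃ ≫ ·) hv
        simp only [hz'_def, Preadditive.sub_comp, Category.assoc, he_def, biprod.lift_snd]
        rw [h3, reassoc_of% hu, sub_self]
      have hz' : z' = (z' ≫ biprod.fst) ≫ biprod.inl := by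
        have htot := biprod.total (X := Y₁) (Y := Y₃)
        calc z' = z' ≫ 𝟙 _ := by simp
          _ = z' ≫ (biprod.fst ≫ biprod.inl + biprod.snd ≫ biprod.inr) := by rw [htot]
          _ = (z' ≫ biprod.fst) ≫ biprod.inl := by
              simp only [Preadditive.comp_add, ← Category.assoc, hz'snd, zero_comp, add_zero]
      refine ⟨T₃, π₃ ≫ π₂ ≫ π₁, epi_comp _ _, (z' ≫ biprod.fst) ≫ cokernel.π a, ?_⟩
      have h4 : z' ≫ cokernel.π e = (π₃ ≫ π₂ ≫ π₁) ≫ t := by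
        simp only [hz'_def, Preadditive.sub_comp, Category.assoc, cokernel.condition,
          comp_zero, sub_zero, hz]
      rw [← h4]
      conv_lhs => rw [hz']
      simp only [Category.assoc, hπα]
    exact ⟨Y₁ ⊞ Y₃, e, he, inferInstance, inferInstance,
      ih α β hw hα_mono hβ_epi hexact hDa hDb⟩

/-- `D k` passes to retracts whose "complement" is projective-injective. -/
lemma D_of_retract (k : ℕ) {P C : A} (q : P ⟶ C) (t : C ⟶ P) (ht : t ≫ q = 𝟙 C)
    (hKp : Projective (kernel q)) (hKi : Injective (kernel q)) (hP : D k P) : D k C := by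
  induction k generalizing P C with
  | zero => trivial
  | succ k ih =>
    obtain ⟨V, v, hv, hvp, hvi, hDv⟩ := hP
    haveI := hv
    haveI : Mono t := mono_of_mono_fac ht
    set c : C ⟶ V := t ≫ v with hc_def
    have hc : Mono c := mono_comp _ _
    have hcπ : c ≫ cokernel.π c = 0 := cokernel.condition c
    set α : kernel q ⟶ cokernel c := kernel.ι q ≫ v ≫ cokernel.π c with hα_def
    have hvπc : c ≫ cokernel.π v = 0 := by
      rw [hc_def, Category.assoc, cokernel.condition, comp_zero]
    set β : cokernel c ⟶ cokernel v := cokernel.desc c (cokernel.π v) hvπc with hβ_def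
    have hπβ : cokernel.π c ≫ β = cokernel.π v := by simp [hβ_def]
    have hw : α ≫ β = 0 := by
      rw [hα_def]
      simp only [Category.assoc, hπβ, cokernel.condition, comp_zero]
    have hα_mono : Mono α := by
      rw [Preadditive.mono_iff_cancel_zero]
      intro T s hs
      have hs' : (s ≫ kernel.ι q ≫ v) ≫ cokernel.π c = 0 := by
        simpa [hα_def, Category.assoc] using hs
      obtain ⟨T₁, π₁, hπ₁, x, hx⟩ := (ShortComplex.exact_cokernel c).exact_up_to_refinements
        (s ≫ kernel.ι q ≫ v) hs'
      dsimp only [ShortComplex.mk] at hx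
      haveI := hπ₁
      have h5 : π₁ ≫ s ≫ kernel.ι q = x ≫ t := by
        rw [← cancel_mono v]
        simpa only [Category.assoc, hc_def] using hx
      have hx0 : x = 0 := by
        have := congrArg (· ≫ q) h5
        simpa only [Category.assoc, kernel.condition, comp_zero, ht, Category.comp_id]
          using this.symm
      rw [hx0, zero_comp] at h5
      have : π₁ ≫ s = 0 := (cancel_mono (kernel.ι q)).1 (by simpa using h5)
      exact (cancel_epi π₁).1 (by simpa using this)
    have hβ_epi : Epi β := by
      have : Epi (cokernel.π v) := inferInstance
      exact epi_of_epi_fac hπβ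
    have hexact : (ShortComplex.mk α β hw).Exact := by
      rw [ShortComplex.exact_iff_exact_up_to_refinements]
      intro T s hs
      dsimp only [ShortComplex.mk] at s hs ⊢
      obtain ⟨T₁, π₁, hπ₁, z, hz⟩ := surjective_up_to_refinements_of_epi (cokernel.π c) s
      haveI := hπ₁
      have h2 : z ≫ cokernel.π v = 0 := by
        have h2' := congrArg (· ≫ β) hz
        simp only [Category.assoc, hs, comp_zero, hπβ] at h2'
        exact h2'.symm
      obtain ⟨T₂, π₂, hπ₂, x, hx⟩ := (ShortComplex.exact_cokernel v).exact_up_to_refinements z h2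
      dsimp only [ShortComplex.mk] at hx
      haveI := hπ₂
      have hx'q : (x - x ≫ q ≫ t) ≫ q = 0 := by
        simp only [Preadditive.sub_comp, Category.assoc, ht, Category.comp_id, sub_self]
      set u : T₂ ⟶ kernel q := kernel.lift q (x - x ≫ q ≫ t) hx'q with hu_def
      have hu : u ≫ kernel.ι q = x - x ≫ q ≫ t := by simp [hu_def]
      refine ⟨T₂, π₂ ≫ π₁, epi_comp _ _, u, ?_⟩
      have : (π₂ ≫ π₁) ≫ s = x ≫ v ≫ cokernel.π c := by
        simp only [Category.assoc, hz]
        rw [reassoc_of% hx]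
      rw [this, hα_def, ← Category.assoc u, hu]
      have h7 : t ≫ v ≫ cokernel.π c = 0 := by
        rw [← Category.assoc, ← hc_def, cokernel.condition]
      simp only [Preadditive.sub_comp, Category.assoc, h7, comp_zero, sub_zero]
    exact ⟨V, c, hc, hvp, hvi,
      D_of_ses k α β hw hα_mono hβ_epi hexact (D_of_projective_injective k hKp hKi) hDv⟩

/-- The key step : quotients drop `D` by (at most) one. -/
lemma D_quotient (k : ℕ) {X₁ X₂ : A} (f : X₁ ⟶ X₂) (hf : Mono f)
    (h1 : D (k+1) X₁) (h2 : D k X₂) : D k (cokernel f) := by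
  obtain ⟨Y, a, ha, hap, hai, hDa⟩ := h1
  haveI := ha; haveI := hf
  set u : X₁ ⟶ Y ⊞ X₂ := biprod.lift a (-f) with hu_def
  set iY : Y ⟶ cokernel u := biprod.inl ≫ cokernel.π u with hiY_def
  set iX : X₂ ⟶ cokernel u := biprod.inr ≫ cokernel.π u with hiX_def
  have hρ0 : u ≫ biprod.desc (0 : Y ⟶ cokernel f) (cokernel.π f) = 0 := by
    simp [hu_def]
  have hσ0 : u ≫ biprod.desc (cokernel.π a) (0 : X₂ ⟶ cokernel a) = 0 := by
    simp [hu_def]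
  set ρ : cokernel u ⟶ cokernel f :=
    cokernel.desc u (biprod.desc 0 (cokernel.π f)) hρ0 with hρ_def
  set σ : cokernel u ⟶ cokernel a :=
    cokernel.desc u (biprod.desc (cokernel.π a) 0) hσ0 with hσ_def
  have hdρ : biprod.desc (0 : Y ⟶ cokernel f) (cokernel.π f) = biprod.snd ≫ cokernel.π f := by
    apply biprod.hom_ext' <;> simp
  have hdσ : biprod.desc (cokernel.π a) (0 : X₂ ⟶ cokernel a)
      = biprod.fst ≫ cokernel.π a := by
    apply biprod.hom_ext' <;> simp
  have hπρ : cokernel.π u ≫ ρ = biprod.snd ≫ cokernel.π f := by simp [hρ_def, hdρ]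
  have hπσ : cokernel.π u ≫ σ = biprod.fst ≫ cokernel.π a := by simp [hσ_def, hdσ]
  -- mono iY
  have hiY_mono : Mono iY := by
    rw [Preadditive.mono_iff_cancel_zero]
    intro T s hs
    have hs' : (s ≫ biprod.inl) ≫ cokernel.π u = 0 := by
      simpa [hiY_def, Category.assoc] using hs
    obtain ⟨T₁, π₁, hπ₁, x, hx⟩ := (ShortComplex.exact_cokernel u).exact_up_to_refinements
      (s ≫ biprod.inl) hs'
    dsimp only [ShortComplex.mk] at hx
    haveI := hπ₁
    have hx0 : x = 0 := by
      have := congrArg (· ≫ biprod.snd) hx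
      simp only [Category.assoc, biprod.inl_snd, comp_zero, hu_def, biprod.lift_snd,
        Preadditive.comp_neg, neg_eq_zero] at this
      exact (cancel_mono f).1 (by simpa using this.symm)
    have : π₁ ≫ s = 0 := by
      have := congrArg (· ≫ biprod.fst) hx
      simpa [hx0, Category.assoc] using this
    exact (cancel_epi π₁).1 (by simpa using this)
  -- mono iX
  have hiX_mono : Mono iX := by
    rw [Preadditive.mono_iff_cancel_zero]
    intro T s hs
    have hs' : (s ≫ biprod.inr) ≫ cokernel.π u = 0 := by
      simpa [hiX_def, Category.assoc] using hs
    obtain ⟨T₁, π₁, hπ₁, x, hx⟩ := (ShortComplex.exact_cokernel u).exact_up_to_refinements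
      (s ≫ biprod.inr) hs'
    dsimp only [ShortComplex.mk] at hx
    haveI := hπ₁
    have hx0 : x = 0 := by
      have := congrArg (· ≫ biprod.fst) hx
      simp only [Category.assoc, biprod.inr_fst, comp_zero, hu_def, biprod.lift_fst] at this
      exact (cancel_mono a).1 (by simpa using this.symm)
    have : π₁ ≫ s = 0 := by
      have := congrArg (· ≫ biprod.snd) hx
      simpa [hx0, Category.assoc] using this
    exact (cancel_epi π₁).1 (by simpa using this)
  -- SES1 : X₂ → cokernel u → cokernel a
  have hw1 : iX ≫ σ = 0 := by
    rw [hiX_def, Category.assoc, hπσ]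
    simp
  have hσ_epi : Epi σ := by
    have hfac : (biprod.inl ≫ cokernel.π u) ≫ σ = cokernel.π a := by
      rw [Category.assoc, hπσ]
      simp
    exact epi_of_epi_fac hfac
  have hex1 : (ShortComplex.mk iX σ hw1).Exact := by
    rw [ShortComplex.exact_iff_exact_up_to_refinements]
    intro T s hs
    dsimp only [ShortComplex.mk] at s hs ⊢
    obtain ⟨T₁, π₁, hπ₁, z, hz⟩ := surjective_up_to_refinements_of_epi (cokernel.π u) s
    haveI := hπ₁
    have h2' : (z ≫ biprod.fst) ≫ cokernel.π a = 0 := by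
      have := congrArg (· ≫ σ) hz
      simp only [Category.assoc, hs, comp_zero, hπσ] at this
      rw [Category.assoc]
      exact this.symm
    obtain ⟨T₂, π₂, hπ₂, x, hx⟩ := (ShortComplex.exact_cokernel a).exact_up_to_refinements
      (z ≫ biprod.fst) h2'
    dsimp only [ShortComplex.mk] at hx
    haveI := hπ₂
    set z' : T₂ ⟶ Y ⊞ X₂ := π₂ ≫ z - x ≫ u with hz'_def
    have hz'fst : z' ≫ biprod.fst = 0 := by
      simp only [hz'_def, Preadditive.sub_comp, Category.assoc, hu_def, biprod.lift_fst]
      simp only [← Category.assoc, hx, sub_self]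
    have hz' : z' = (z' ≫ biprod.snd) ≫ biprod.inr := by
      have htot := biprod.total (X := Y) (Y := X₂)
      calc z' = z' ≫ 𝟙 _ := by simp
        _ = z' ≫ (biprod.fst ≫ biprod.inl + biprod.snd ≫ biprod.inr) := by rw [htot]
        _ = (z' ≫ biprod.snd) ≫ biprod.inr := by
            simp only [Preadditive.comp_add, ← Category.assoc, hz'fst, zero_comp, zero_add]
    refine ⟨T₂, π₂ ≫ π₁, epi_comp _ _, z' ≫ biprod.snd, ?_⟩
    have h4 : z' ≫ cokernel.π u = (π₂ ≫ π₁) ≫ s := by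
      simp only [hz'_def, Preadditive.sub_comp, Category.assoc, cokernel.condition,
        comp_zero, sub_zero, hz]
    rw [← h4]
    conv_lhs => rw [hz']
    simp only [Category.assoc, hiX_def]
  -- SES2 : Y → cokernel u → cokernel f
  have hw2 : iY ≫ ρ = 0 := by
    rw [hiY_def, Category.assoc, hπρ]
    simp
  have hρ_epi : Epi ρ := by
    have hfac : (biprod.inr ≫ cokernel.π u) ≫ ρ = cokernel.π f := by
      rw [Category.assoc, hπρ]
      simp
    exact epi_of_epi_fac hfac
  have hex2 : (ShortComplex.mk iY ρ hw2).Exact := by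
    rw [ShortComplex.exact_iff_exact_up_to_refinements]
    intro T s hs
    dsimp only [ShortComplex.mk] at s hs ⊢
    obtain ⟨T₁, π₁, hπ₁, z, hz⟩ := surjective_up_to_refinements_of_epi (cokernel.π u) s
    haveI := hπ₁
    have h2' : (z ≫ biprod.snd) ≫ cokernel.π f = 0 := by
      have := congrArg (· ≫ ρ) hz
      simp only [Category.assoc, hs, comp_zero, hπρ] at this
      rw [Category.assoc]
      exact this.symm
    obtain ⟨T₂, π₂, hπ₂, x, hx⟩ := (ShortComplex.exact_cokernel f).exact_up_to_refinements
      (z ≫ biprod.snd) h2'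
    dsimp only [ShortComplex.mk] at hx
    haveI := hπ₂
    set z' : T₂ ⟶ Y ⊞ X₂ := π₂ ≫ z + x ≫ u with hz'_def
    have hz'snd : z' ≫ biprod.snd = 0 := by
      simp only [hz'_def, Preadditive.add_comp, Category.assoc, hu_def, biprod.lift_snd,
        Preadditive.comp_neg]
      simp only [← Category.assoc, hx, add_neg_cancel]
    have hz' : z' = (z' ≫ biprod.fst) ≫ biprod.inl := by
      have htot := biprod.total (X := Y) (Y := X₂)
      calc z' = z' ≫ 𝟙 _ := by simp
        _ = z' ≫ (biprod.fst ≫ biprod.inl + biprod.snd ≫ biprod.inr) := by rw [htot]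
        _ = (z' ≫ biprod.fst) ≫ biprod.inl := by
            simp only [Preadditive.comp_add, ← Category.assoc, hz'snd, zero_comp, add_zero]
    refine ⟨T₂, π₂ ≫ π₁, epi_comp _ _, z' ≫ biprod.fst, ?_⟩
    have h4 : z' ≫ cokernel.π u = (π₂ ≫ π₁) ≫ s := by
      simp only [hz'_def, Preadditive.add_comp, Category.assoc, cokernel.condition,
        comp_zero, add_zero, hz]
    rw [← h4]
    conv_lhs => rw [hz']
    simp only [Category.assoc, hiY_def]
  -- D k (cokernel u)
  have hDP : D k (cokernel u) := D_of_ses k iX σ hw1 hiX_mono hσ_epi hex1 h2 hDa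
  -- kernel ρ ≅ Y, hence projective and injective
  haveI := hiY_mono
  haveI := hρ_epi
  have hYker := IsLimit.conePointUniqueUpToIso (hex2.fIsKernel) (kernelIsKernel ρ)
  -- splitting
  set r : cokernel u ⟶ Y := Injective.factorThru (𝟙 Y) iY with hr_def
  have hiYr : iY ≫ r = 𝟙 Y := Injective.comp_factorThru (𝟙 Y) iY
  have hs0 : iY ≫ (𝟙 (cokernel u) - r ≫ iY) = 0 := by
    simp only [Preadditive.comp_sub, Category.comp_id, ← Category.assoc, hiYr, Category.id_comp,
      sub_self]
  set t : cokernel f ⟶ cokernel u := hex2.desc (𝟙 (cokernel u) - r ≫ iY) hs0 with ht_def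
  have hρt : ρ ≫ t = 𝟙 (cokernel u) - r ≫ iY := hex2.g_desc _ _
  have htρ : t ≫ ρ = 𝟙 (cokernel f) := by
    rw [← cancel_epi ρ, ← Category.assoc, hρt]
    simp only [Preadditive.sub_comp, Category.id_comp, Category.assoc, Category.comp_id]
    rw [hw2, comp_zero, sub_zero]
  exact D_of_retract k ρ t htρ
    (Projective.of_iso hYker hap) (Injective.of_iso hYker hai) hDP

/-! ### Conversions -/

open ComposableArrows in
lemma toD : ∀ (k : ℕ) (T : ComposableArrows A k), T.Exact →
    (∀ (h : 1 ≤ k), Mono (T.map' 0 1 (by omega) h)) →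
    (∀ (i : ℕ) (hi : i ≤ k), 1 ≤ i → Projective (T.obj' i hi) ∧ Injective (T.obj' i hi)) →
    D k (T.obj' 0 (by omega))
  | 0, _, _, _, _ => trivial
  | 1, T, _, hmono, hpi =>
    ⟨T.obj' 1, T.map' 0 1, hmono (by omega), (hpi 1 (by omega) (by omega)).1,
      (hpi 1 (by omega) (by omega)).2, trivial⟩
  | (j+2), T, hT, hmono, hpi => by
    have w01 : T.map' 0 1 ≫ T.map' 1 2 = 0 := hT.toIsComplex.zero 0 (by omega)
    set d := cokernel.desc (T.map' 0 1) (T.map' 1 2) w01 with hd_def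
    have hπd : cokernel.π (T.map' 0 1) ≫ d = T.map' 1 2 := by
      rw [hd_def]; exact cokernel.π_desc _ _ _
    have hsc12 : (ShortComplex.mk (T.map' 0 1) (T.map' 1 2) w01).Exact := hT.exact 0 (by omega)
    have hd_mono : Mono d := mono_cokernelDesc w01 hsc12
    have hSexact : ((T.δ₀.δ₀).precomp d).Exact := by
      cases j with
      | zero => exact exact_precomp_zero _ _
      | succ j' =>
        have wtail : d ≫ T.map' 2 3 (by omega) (by omega) = 0 := by
          rw [← cancel_epi (cokernel.π (T.map' 0 1 (by omega) (by omega)))]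
          rw [reassoc_of% hπd, comp_zero]
          exact hT.toIsComplex.zero 1 (by omega)
        exact exact_precomp_of_sc _ (hT.δ₀.δ₀) d wtail
          (sc_exact_cancel_epi (cokernel.π (T.map' 0 1)) hπd.symm (hT.exact 1 (by omega)))
    have hrec : D (j+1) (cokernel (T.map' 0 1)) := by
      refine toD (j+1) ((T.δ₀.δ₀).precomp d) hSexact (fun _ => hd_mono) ?_
      rintro (_|i) hi h1
      · omega
      · exact hpi (i+2) (by omega) (by omega)
    exact ⟨T.obj' 1, T.map' 0 1, hmono (by omega), (hpi 1 (by omega) (by omega)).1,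
      (hpi 1 (by omega) (by omega)).2, hrec⟩

open ComposableArrows in
lemma ofD : ∀ (k : ℕ) (X : A), D k X → DomdimGE X k
  | 0, X, _ =>
    ⟨mk₀ X, rfl, by rintro i hi h1; omega, exact₀ _, by intro h; omega⟩
  | 1, X, ⟨Y, f, hmf, hp, hi, _⟩ =>
    ⟨mk₁ f, rfl, by
      rintro (_|(_|i)) hi' h1
      · omega
      · exact ⟨hp, hi⟩
      · omega, exact₁ _, fun _ => hmf⟩
  | (j+2), X, ⟨Y, f, hmf, hp, hin, hD⟩ => by
    obtain ⟨S, h0, hSpi, hSex, hSmono⟩ := ofD (j+1) (cokernel f) hD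
    haveI : Mono (S.map' 0 1) := hSmono (by omega)
    set q : cokernel f ⟶ S.obj' 1 := eqToHom h0.symm ≫ S.map' 0 1 with hq_def
    haveI : Mono q := mono_comp _ _
    set g : Y ⟶ S.obj' 1 := cokernel.π f ≫ q with hg_def
    set T := ((S.δ₀.precomp g).precomp f : ComposableArrows A (j+2)) with hT_def
    have wfg : f ≫ g = 0 := by
      rw [hg_def, ← Category.assoc, cokernel.condition, zero_comp]
    have hhead : (ShortComplex.mk f g wfg).Exact :=
      sc_exact_comp_mono (ShortComplex.exact_cokernel f) q
    have hTexact : T.Exact := by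
      refine exact_of_δ₀ hhead.exact_toComposableArrows ?_
      cases j with
      | zero => exact exact_precomp_zero _ _
      | succ j' =>
        haveI : Epi (cokernel.π f ≫ eqToHom h0.symm) := epi_comp _ _
        have wtail : g ≫ S.map' 1 2 (by omega) (by omega) = 0 := by
          rw [hg_def, hq_def]
          simp only [Category.assoc]
          rw [hSex.toIsComplex.zero 0 (by omega), comp_zero, comp_zero]
        exact exact_precomp_of_sc _ hSex.δ₀ g wtail
          (sc_exact_of_epi_comp' (cokernel.π f ≫ eqToHom h0.symm) (hSex.exact 0 (by omega))
            (by rw [hg_def, hq_def, Category.assoc]))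
    exact ⟨T, rfl, by
      rintro (_|(_|i)) hi' h1
      · omega
      · exact ⟨hp, hin⟩
      · exact hSpi (i+1) (by omega) (by omega), hTexact, fun _ => hmf⟩

lemma GPd_iso_left : ∀ (k : ℕ) {B B' X : A}, (B ≅ B') → GPd B k X → GPd B' k X
  | 0, _, _, _, e, ⟨e'⟩ => ⟨e.symm.trans e'⟩
  | (k+1), _, _, _, e, ⟨P, f, hf, hP, h⟩ => by
    haveI := hf
    exact ⟨P, e.inv ≫ f, mono_comp _ _, hP,
      GPd_iso_left k (cokernelEpiComp e.inv f).symm h⟩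

lemma RPd_step : ∀ (m : ℕ) {B P Q X : A} (i : B ⟶ P) (q : P ⟶ Q) (w : i ≫ q = 0)
    (hi : Mono i) (hq : Epi q) (hex : (ShortComplex.mk i q w).Exact) (hP : Projective P),
    RPd Q m X → RPd B (m+1) X
  | 0, _, P, Q, X, i, q, w, hi, hq, hex, hP, ⟨e⟩ => by
    haveI := hi; haveI := hq
    refine ⟨P, q ≫ e.hom, epi_comp _ _, hP, ?_⟩
    have h1 := IsLimit.conePointUniqueUpToIso hex.fIsKernel (kernelIsKernel q)
    exact ⟨h1.trans (kernelCompMono q e.hom).symm⟩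
  | (m+1), _, P, Q, X, i, q, w, hi, hq, hex, hP, ⟨P', p, hp, hP', h⟩ =>
    ⟨P', p, hp, hP', RPd_step m i q w hi hq hex hP h⟩

lemma GPd_step : ∀ (m : ℕ) {B K P X : A} (i : K ⟶ P) (q : P ⟶ X) (w : i ≫ q = 0)
    (hi : Mono i) (hq : Epi q) (hex : (ShortComplex.mk i q w).Exact) (hP : Projective P),
    GPd B m K → GPd B (m+1) X
  | 0, _, K, P, X, i, q, w, hi, hq, hex, hP, ⟨e⟩ => by
    haveI := hi; haveI := hq
    refine ⟨P, e.hom ≫ i, mono_comp _ _, hP, ?_⟩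
    have h1 := IsColimit.coconePointUniqueUpToIso (cokernelIsCokernel i) hex.gIsCokernel
    exact ⟨(cokernelEpiComp e.hom i).trans h1⟩
  | (m+1), _, K, P, X, i, q, w, hi, hq, hex, hP, ⟨P₁, f, hf, hP₁, h⟩ =>
    ⟨P₁, f, hf, hP₁, GPd_step m i q w hi hq hex hP h⟩

lemma GPd_to_RPd : ∀ (m : ℕ) {B X : A}, GPd B m X → RPd B m X
  | 0, _, _, h => h
  | (m+1), _, _, ⟨P, f, hf, hP, h⟩ =>
    RPd_step m f (cokernel.π f) (cokernel.condition f) hf inferInstance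
      (ShortComplex.exact_cokernel f) hP (GPd_to_RPd m h)

lemma RPd_to_GPd : ∀ (m : ℕ) {B X : A}, RPd B m X → GPd B m X
  | 0, _, _, h => h
  | (m+1), _, _, ⟨P, p, hp, hP, h⟩ => by
    haveI := hp
    exact GPd_step m (kernel.ι p) p (kernel.condition p) inferInstance hp
      (ShortComplex.exact_kernel p) hP (RPd_to_GPd m h)

lemma RPd_pad : ∀ (m : ℕ) {B X : A}, Projective B → RPd B m X →
    ∃ B' : A, Projective B' ∧ RPd B' (m+1) X
  | 0, B, X, hB, ⟨e⟩ => by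
    haveI : Epi e.hom := inferInstance
    have h1 : kernel.ι e.hom = 0 := by
      rw [← cancel_mono e.hom, kernel.condition, zero_comp]
    have hz : IsZero (kernel e.hom) := by
      rw [IsZero.iff_id_eq_zero, ← cancel_mono (kernel.ι e.hom)]
      simp [h1]
    exact ⟨kernel e.hom, projective_of_isZero hz,
      ⟨B, e.hom, inferInstance, hB, ⟨Iso.refl _⟩⟩⟩
  | (m+1), B, X, hB, ⟨P, p, hp, hP, h⟩ => by
    obtain ⟨B', hB', h'⟩ := RPd_pad m hB h
    exact ⟨B', hB', ⟨P, p, hp, hP, h'⟩⟩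

lemma GPd_zero_of_mono_epi {B X : A} (f : B ⟶ X) (hm : Mono f) (he : Epi f) : GPd B 0 X :=
  haveI := hm
  haveI := he
  haveI := isIso_of_mono_of_epi f
  ⟨asIso f⟩

open ComposableArrows in
lemma toGPd : ∀ (m : ℕ) (T : ComposableArrows A (m+1)), T.Exact →
    Mono (T.map' 0 1 (by omega) (by omega)) →
    Epi (T.map' m (m+1) (by omega) (by omega)) →
    (∀ (i : ℕ) (_ : 1 ≤ i) (_ : i ≤ m), Projective (T.obj' i (by omega))) →
    GPd (T.obj' 0 (by omega)) m (T.obj' (m+1) (by omega))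
  | 0, T, hT, hmono, hepi, hproj =>
    GPd_zero_of_mono_epi (T.map' 0 1) hmono hepi
  | (m+1), T, hT, hmono, hepi, hproj => by
    haveI := hmono
    have w01 : T.map' 0 1 ≫ T.map' 1 2 = 0 := hT.toIsComplex.zero 0 (by omega)
    set d := cokernel.desc (T.map' 0 1) (T.map' 1 2) w01 with hd_def
    have hπd : cokernel.π (T.map' 0 1) ≫ d = T.map' 1 2 := by
      rw [hd_def]; exact cokernel.π_desc _ _ _
    have hd_mono : Mono d := mono_cokernelDesc w01 (hT.exact 0 (by omega))
    have hSexact : ((T.δ₀.δ₀).precomp d).Exact := by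
      cases m with
      | zero => exact exact_precomp_zero _ _
      | succ m' =>
        have wtail : d ≫ T.map' 2 3 (by omega) (by omega) = 0 := by
          rw [← cancel_epi (cokernel.π (T.map' 0 1 (by omega) (by omega)))]
          rw [reassoc_of% hπd, comp_zero]
          exact hT.toIsComplex.zero 1 (by omega)
        exact exact_precomp_of_sc _ (hT.δ₀.δ₀) d wtail
          (sc_exact_cancel_epi (cokernel.π (T.map' 0 1)) hπd.symm (hT.exact 1 (by omega)))
    have hSepi : Epi (((T.δ₀.δ₀).precomp d).map' m (m+1) (by omega) (by omega)) := by
      cases m with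
      | zero =>
        haveI := hepi
        exact @epi_of_epi_fac _ _ _ _ _ _ _ _ hepi hπd
      | succ m' => exact hepi
    have hrec := toGPd m ((T.δ₀.δ₀).precomp d) hSexact hd_mono hSepi (by
      intro i h1 h2
      match i, h1 with
      | (i'+1), _ => exact hproj (i'+2) (by omega) (by omega))
    exact ⟨T.obj' 1, T.map' 0 1, hmono, hproj 1 (by omega) (by omega), hrec⟩

open ComposableArrows in
lemma ofGPd : ∀ (m : ℕ) (B X : A), GPd B m X →
    ∃ T : ComposableArrows A (m+1), T.obj' 0 (by omega) = B ∧ T.obj' (m+1) (by omega) = X ∧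
      (∀ (i : ℕ) (_ : 1 ≤ i) (_ : i ≤ m), Projective (T.obj' i (by omega))) ∧
      T.Exact ∧ Mono (T.map' 0 1 (by omega) (by omega)) ∧
      Epi (T.map' m (m+1) (by omega) (by omega))
  | 0, B, X, ⟨e⟩ => by
    haveI : Mono e.hom := inferInstance
    haveI : Epi e.hom := inferInstance
    exact ⟨mk₁ e.hom, rfl, rfl, by intro i h1 h2; omega, exact₁ _, ‹Mono e.hom›, ‹Epi e.hom›⟩
  | (m+1), B, X, ⟨P, f, hf, hP, h⟩ => by
    obtain ⟨S, h0, hlast, hSproj, hSex, hSmono, hSepi⟩ := ofGPd m (cokernel f) X h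
    haveI := hSmono; haveI := hf
    set q : cokernel f ⟶ S.obj' 1 := eqToHom h0.symm ≫ S.map' 0 1 with hq_def
    haveI : Mono q := mono_comp _ _
    set g : P ⟶ S.obj' 1 := cokernel.π f ≫ q with hg_def
    have wfg : f ≫ g = 0 := by rw [hg_def, ← Category.assoc, cokernel.condition, zero_comp]
    have hhead : (ShortComplex.mk f g wfg).Exact :=
      sc_exact_comp_mono (ShortComplex.exact_cokernel f) q
    have hTexact : ((S.δ₀.precomp g).precomp f).Exact := by
      refine exact_of_δ₀ hhead.exact_toComposableArrows ?_
      cases m with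
      | zero => exact exact_precomp_zero _ _
      | succ m' =>
        haveI : Epi (cokernel.π f ≫ eqToHom h0.symm) := epi_comp _ _
        have wtail : g ≫ S.map' 1 2 (by omega) (by omega) = 0 := by
          rw [hg_def, hq_def]
          simp only [Category.assoc]
          rw [hSex.toIsComplex.zero 0 (by omega), comp_zero, comp_zero]
        exact exact_precomp_of_sc _ hSex.δ₀ g wtail
          (sc_exact_of_epi_comp' (cokernel.π f ≫ eqToHom h0.symm) (hSex.exact 0 (by omega))
            (by rw [hg_def, hq_def, Category.assoc]))
    have hTepi : Epi (((S.δ₀.precomp g).precomp f).map' (m+1) (m+2) (by omega) (by omega)) := by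
      cases m with
      | zero =>
        haveI := hSepi
        haveI : Epi q := by rw [hq_def]; exact epi_comp _ _
        show Epi g
        rw [hg_def]
        exact epi_comp _ _
      | succ m' => exact hSepi
    refine ⟨(S.δ₀.precomp g).precomp f, rfl, hlast, ?_, hTexact, hf, hTepi⟩
    intro i h1 h2
    match i, h1 with
    | 1, _ => exact hP
    | (i'+2), _ => exact hSproj (i'+1) (by omega) (by omega)


/-! ### Bridges between the recursive predicates and the paper's definitions -/

lemma D_of_DomdimGE {k : ℕ} {X : A} (h : DomdimGE X k) : D k X := by
  obtain ⟨T, h0, hpi, hex, hmono⟩ := h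
  have := toD k T hex hmono hpi
  rwa [h0] at this

lemma DomdimGE_of_D {k : ℕ} {X : A} (h : D k X) : DomdimGE X k := ofD k X h

lemma GPd_of_PdimProjLE {d : ℕ} {X : A} (h : PdimProjLE X d) :
    ∃ B : A, Projective B ∧ GPd B d X := by
  obtain ⟨T, hX, hproj, hex, hmono, hepi⟩ := h
  have := toGPd d T hex hmono hepi (fun i _ h2 => hproj i h2)
  rw [hX] at this
  exact ⟨T.obj' 0 (by omega), hproj 0 (by omega), this⟩

lemma PdimProjLE_of_GPd {d : ℕ} {B X : A} (hB : Projective B) (h : GPd B d X) :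
    PdimProjLE X d := by
  obtain ⟨T, h0, hlast, hproj, hex, hmono, hepi⟩ := ofGPd d B X h
  refine ⟨T, hlast, ?_, hex, hmono, hepi⟩
  intro i hi
  match i with
  | 0 => rw [h0]; exact hB
  | (i+1) => exact hproj (i+1) (by omega) hi

/-! ### Main induction arguments -/

lemma main_ab (n : ℕ) (ha : ∀ P : A, Projective P → D (n+1) P) :
    ∀ (m : ℕ), m ≤ n → ∀ (B X : A), Projective B → RPd B m X → D (n+1-m) X := by
  intro m
  induction m with
  | zero =>
    intro _ B X hB h
    obtain ⟨e⟩ := h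
    exact D_of_iso _ e (ha B hB)
  | succ m ih =>
    intro hm B X hB h
    obtain ⟨P, p, hp, hP, hr⟩ := h
    haveI := hp
    have hk : D (n-m+1) (kernel p) := by
      have := ih (by omega) B _ hB hr
      rwa [show n+1-m = n-m+1 by omega] at this
    have h2 : D (n-m) P := D_le (n+1) (n-m) (by omega) (ha P hP)
    have h3 : D (n-m) (cokernel (kernel.ι p)) :=
      D_quotient (n-m) (kernel.ι p) inferInstance hk h2
    have hiso := IsColimit.coconePointUniqueUpToIso (cokernelIsCokernel (kernel.ι p))
      ((ShortComplex.exact_kernel p).gIsCokernel)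
    rw [show n+1-(m+1) = n-m by omega]
    exact D_of_iso _ hiso h3

lemma RPd_iso_right : ∀ (m : ℕ) {B X X' : A}, (X ≅ X') → RPd B m X → RPd B m X'
  | 0, _, _, _, e, ⟨e'⟩ => ⟨e'.trans e⟩
  | (m+1), _, _, _, e, ⟨P, p, hp, hP, h⟩ => by
    haveI := hp
    exact ⟨P, p ≫ e.hom, epi_comp _ _, hP,
      RPd_iso_right m (kernelCompMono p e.hom).symm h⟩

lemma main_ca (n : ℕ) (hc : ∀ (B X : A), Projective B → RPd B n X → D 1 X) :
    ∀ (j : ℕ), j ≤ n → ∀ (B X : A), Projective B → RPd B (n-j) X → D (j+1) X := by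
  intro j
  induction j with
  | zero =>
    intro _ B X hB h
    exact hc B X hB h
  | succ j ih =>
    intro hj B X hB h
    obtain ⟨B', hB', h'⟩ := RPd_pad _ hB h
    rw [show n-(j+1)+1 = n-j by omega] at h'
    obtain ⟨Y, x, hx, hYp, hYi, _⟩ := ih (by omega) B' X hB' h'
    haveI := hx
    have hr' : RPd B (n-j) (cokernel x) := by
      have hker := IsLimit.conePointUniqueUpToIso ((ShortComplex.exact_cokernel x).fIsKernel)
        (kernelIsKernel (cokernel.π x))
      rw [show n-j = (n-(j+1))+1 by omega]
      exact ⟨Y, cokernel.π x, inferInstance, hYp, RPd_iso_right _ hker h⟩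
    exact ⟨Y, x, hx, hYp, hYi, ih (by omega) B (cokernel x) hB hr'⟩

end Stmt4

open Stmt4

/-- In an abelian category with enough projectives, the following are equivalent for a
positive integer `n`: (a) every projective object has dominant dimension `≥ n + 1`;
(b) every object of projective dimension `≤ m` has dominant dimension `≥ n + 1 - m`,
for all `0 ≤ m ≤ n`; (c) every object of projective dimension `≤ n` has dominant
dimension `≥ 1`. -/
theorem stmt_4 {A : Type*} [Category A] [Abelian A] [EnoughProjectives A]
    (n : ℕ) (hn : 1 ≤ n) :
    ((∀ P : A, Projective P → DomdimGE P (n + 1)) ↔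
      (∀ m : ℕ, m ≤ n → ∀ X : A, PdimProjLE X m → DomdimGE X (n + 1 - m))) ∧
    ((∀ P : A, Projective P → DomdimGE P (n + 1)) ↔
      (∀ X : A, PdimProjLE X n → DomdimGE X 1)) := by
  have hab : (∀ P : A, Projective P → DomdimGE P (n + 1)) →
      ∀ m : ℕ, m ≤ n → ∀ X : A, PdimProjLE X m → DomdimGE X (n + 1 - m) := by
    intro ha m hm X hX
    obtain ⟨B, hB, hG⟩ := GPd_of_PdimProjLE hX
    exact DomdimGE_of_D (main_ab n (fun P hP => D_of_DomdimGE (ha P hP)) m hm B X hB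
      (GPd_to_RPd m hG))
  have hba : (∀ m : ℕ, m ≤ n → ∀ X : A, PdimProjLE X m → DomdimGE X (n + 1 - m)) →
      ∀ P : A, Projective P → DomdimGE P (n + 1) := by
    intro hb P hP
    have h0 : PdimProjLE P 0 := PdimProjLE_of_GPd hP ⟨Iso.refl P⟩
    have := hb 0 (by omega) P h0
    simpa using this
  have hca : (∀ X : A, PdimProjLE X n → DomdimGE X 1) →
      ∀ P : A, Projective P → DomdimGE P (n + 1) := by
    intro hc P hP
    have hc' : ∀ (B X : A), Projective B → RPd B n X → D 1 X := fun B X hB hR =>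
      D_of_DomdimGE (hc X (PdimProjLE_of_GPd hB (RPd_to_GPd n hR)))
    have hr : RPd P (n-n) P := by
      rw [show n-n = 0 by omega]
      exact ⟨Iso.refl P⟩
    exact DomdimGE_of_D (main_ca n hc' n le_rfl P P hP hr)
  have hac : (∀ P : A, Projective P → DomdimGE P (n + 1)) →
      ∀ X : A, PdimProjLE X n → DomdimGE X 1 := by
    intro ha X hX
    have := hab ha n le_rfl X hX
    rwa [show n + 1 - n = 1 by omega] at this
  exact ⟨⟨hab, hba⟩, ⟨hac, hca⟩⟩
end

section
/- An additive idempotent complete category C has weak kernels if and only if the category of finitely presented contravariant additive functors from C to abelian groups is abelian. -/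
open CategoryTheory CategoryTheory.Limits Opposite

namespace Paper


variable {C : Type*} [Category C] [Preadditive C]

/-- Exactness of the sequence of contravariant representable functors at interior position `i`. -/
def YExactAt {m : ℕ} (T : ComposableArrows C m) (i : ℕ) (h : i + 2 ≤ m) : Prop :=
  T.map' i (i+1) (by omega) (by omega) ≫ T.map' (i+1) (i+2) (by omega) h = 0 ∧
  ∀ (W : C) (u : W ⟶ T.obj' (i+1) (by omega)),
    u ≫ T.map' (i+1) (i+2) (by omega) h = 0 →
      ∃ v : W ⟶ T.obj' i (by omega), v ≫ T.map' i (i+1) (by omega) (by omega) = u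

/-- Exactness of the sequence of covariant representable functors at interior position `i`. -/
def CoYExactAt {m : ℕ} (T : ComposableArrows C m) (i : ℕ) (h : i + 2 ≤ m) : Prop :=
  T.map' i (i+1) (by omega) (by omega) ≫ T.map' (i+1) (i+2) (by omega) h = 0 ∧
  ∀ (W : C) (u : T.obj' (i+1) (by omega) ⟶ W),
    T.map' i (i+1) (by omega) (by omega) ≫ u = 0 →
      ∃ v : T.obj' (i+2) h ⟶ W, T.map' (i+1) (i+2) (by omega) h ≫ v = u

/-- `T = [X_n → ⋯ → X_1 → X → Y]` is such that `X_n → ⋯ → X` is an `n`-kernel of the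
last map `X ⟶ Y`, i.e. `0 → C(-,X_n) → ⋯ → C(-,X) → C(-,Y)` is exact. -/
def IsNKernelSeq (n : ℕ) (T : ComposableArrows C (n+1)) : Prop :=
  Mono (T.map' 0 1 (by omega) (by omega)) ∧ ∀ (i : ℕ) (h : i + 2 ≤ n + 1), YExactAt T i h

/-- `T = [X → Y → Y_1 → ⋯ → Y_n]` is such that `Y → ⋯ → Y_n` is an `n`-cokernel of the
first map `X ⟶ Y`, i.e. `0 → C(Y_n,-) → ⋯ → C(Y,-) → C(X,-)` is exact. -/
def IsNCokernelSeq (n : ℕ) (T : ComposableArrows C (n+1)) : Prop :=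
  Epi (T.map' n (n+1) (by omega) (by omega)) ∧ ∀ (i : ℕ) (h : i + 2 ≤ n + 1), CoYExactAt T i h

/-- `T` is an `n`-exact sequence. -/
def IsNExactSeq (n : ℕ) (T : ComposableArrows C (n+1)) : Prop :=
  IsNKernelSeq n T ∧ IsNCokernelSeq n T

/-- The category `C` has `n`-kernels. -/
def HasNKernels (C : Type*) [Category C] [Preadditive C] (n : ℕ) : Prop :=
  ∀ ⦃X Y : C⦄ (f : X ⟶ Y), ∃ (T : ComposableArrows C (n+1))
    (hX : T.obj' n (by omega) = X) (hY : T.obj' (n+1) (by omega) = Y),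
      T.map' n (n+1) (by omega) (by omega) = eqToHom hX ≫ f ≫ eqToHom hY.symm ∧
      IsNKernelSeq n T

/-- The category `C` has `n`-cokernels. -/
def HasNCokernels (C : Type*) [Category C] [Preadditive C] (n : ℕ) : Prop :=
  ∀ ⦃X Y : C⦄ (f : X ⟶ Y), ∃ (T : ComposableArrows C (n+1))
    (hX : T.obj' 0 (by omega) = X) (hY : T.obj' 1 (by omega) = Y),
      T.map' 0 1 (by omega) (by omega) = eqToHom hX ≫ f ≫ eqToHom hY.symm ∧
      IsNCokernelSeq n T

/-- Axiom (A2): every monomorphism, together with any of its `n`-cokernels, forms an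
`n`-exact sequence. -/
def AxiomA2 (C : Type*) [Category C] [Preadditive C] (n : ℕ) : Prop :=
  ∀ (T : ComposableArrows C (n+1)), Mono (T.map' 0 1 (by omega) (by omega)) →
    IsNCokernelSeq n T → IsNExactSeq n T

/-- Axiom (A2ᵒᵖ): every epimorphism, together with any of its `n`-kernels, forms an
`n`-exact sequence. -/
def AxiomA2op (C : Type*) [Category C] [Preadditive C] (n : ℕ) : Prop :=
  ∀ (T : ComposableArrows C (n+1)), Epi (T.map' n (n+1) (by omega) (by omega)) →
    IsNKernelSeq n T → IsNExactSeq n T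

/-- Jasso's axioms for an `n`-abelian category. -/
def IsNAbelian (C : Type*) [Category C] [Preadditive C] (n : ℕ) : Prop :=
  HasNKernels C n ∧ HasNCokernels C n ∧ AxiomA2 C n ∧ AxiomA2op C n

/-- `C` has weak kernels. -/
def HasWeakKernelsP (C : Type*) [Category C] [Preadditive C] : Prop :=
  ∀ ⦃Y Z : C⦄ (g : Y ⟶ Z), ∃ (X : C) (f : X ⟶ Y), f ≫ g = 0 ∧
    ∀ ⦃W : C⦄ (u : W ⟶ Y), u ≫ g = 0 → ∃ v : W ⟶ X, v ≫ f = u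

/-- `C` has weak cokernels. -/
def HasWeakCokernelsP (C : Type*) [Category C] [Preadditive C] : Prop :=
  ∀ ⦃X Y : C⦄ (f : X ⟶ Y), ∃ (Z : C) (g : Y ⟶ Z), f ≫ g = 0 ∧
    ∀ ⦃W : C⦄ (u : Y ⟶ W), f ≫ u = 0 → ∃ v : Z ⟶ W, g ≫ v = u

/-- A category is von Neumann regular if every morphism factors as a split epimorphism
followed by a split monomorphism. -/
def VonNeumannRegular (C : Type*) [Category C] : Prop :=
  ∀ ⦃X Y : C⦄ (f : X ⟶ Y), ∃ (W : C) (p : X ⟶ W) (j : W ⟶ Y),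
    IsSplitEpi p ∧ IsSplitMono j ∧ p ≫ j = f


universe u

variable (C : Type u) [Category.{u} C] [Preadditive C]

/-- The ambient category of contravariant additive-group-valued functors on `C`,
in which `mod C` lives. -/
abbrev AmbC := Cᵒᵖ ⥤ AddCommGrpCat.{u}

/-- The ambient category of covariant additive-group-valued functors on `C`,
in which `mod Cᵒᵖ` lives. -/
abbrev AmbOp := C ⥤ AddCommGrpCat.{u}

variable {C}

/-- `p : B ⟶ Q` is a cokernel of `d : A ⟶ B` (universal property). -/
def IsCokernelπ {D : Type*} [Category D] [Limits.HasZeroMorphisms D]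
    {A B Q : D} (d : A ⟶ B) (p : B ⟶ Q) : Prop :=
  d ≫ p = 0 ∧ ∀ ⦃T : D⦄ (q : B ⟶ T), d ≫ q = 0 → ∃! t : Q ⟶ T, p ≫ t = q

/-- A contravariant functor is finitely presented if it is a cokernel of a morphism
between representable functors. -/
def IsFinitelyPresented (F : AmbC C) : Prop :=
  ∃ (X Y : C) (f : X ⟶ Y) (p : preadditiveYoneda.obj Y ⟶ F),
    IsCokernelπ (preadditiveYoneda.map f) p

/-- A covariant functor is finitely presented if it is a cokernel of a morphism
between corepresentable functors. -/
def IsFinitelyPresentedOp (G : AmbOp C) : Prop :=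
  ∃ (X Y : C) (f : X ⟶ Y) (q : preadditiveCoyoneda.obj (op X) ⟶ G),
    IsCokernelπ (preadditiveCoyoneda.map f.op) q

variable (C)

/-- The category `mod C` of finitely presented contravariant functors. -/
def ModC := ObjectProperty.FullSubcategory (IsFinitelyPresented (C := C))

instance : Category (ModC C) := ObjectProperty.FullSubcategory.category _

/-- The category `mod Cᵒᵖ` of finitely presented covariant functors. -/
def ModOp := ObjectProperty.FullSubcategory (IsFinitelyPresentedOp (C := C))

instance : Category (ModOp C) := ObjectProperty.FullSubcategory.category _

variable {C}

/-- A finitely generated projective object of `mod C`: a direct summand of a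
representable functor. -/
def IsFGProj (P : AmbC C) : Prop :=
  ∃ (X : C) (s : P ⟶ preadditiveYoneda.obj X) (r : preadditiveYoneda.obj X ⟶ P),
    s ≫ r = 𝟙 P

/-- A finitely generated projective object of `mod Cᵒᵖ`: a direct summand of a
corepresentable functor. -/
def IsFGProjOp (P : AmbOp C) : Prop :=
  ∃ (X : C) (s : P ⟶ preadditiveCoyoneda.obj (op X))
    (r : preadditiveCoyoneda.obj (op X) ⟶ P), s ≫ r = 𝟙 P

/-- `pdim F ≤ d` in `mod C`: there is an exact sequence
`0 → P_d → ⋯ → P_0 → F → 0` with all `P_i` finitely generated projective. -/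
def PdimLE (F : AmbC C) (d : ℕ) : Prop :=
  ∃ T : ComposableArrows (AmbC C) (d+1), T.obj' (d+1) (by omega) = F ∧
    (∀ (i : ℕ) (hi : i ≤ d), IsFGProj (T.obj' i (by omega))) ∧
    T.Exact ∧ Mono (T.map' 0 1 (by omega) (by omega)) ∧
    Epi (T.map' d (d+1) (by omega) (by omega))

/-- `pdim G ≤ d` in `mod Cᵒᵖ`. -/
def PdimOpLE (G : AmbOp C) (d : ℕ) : Prop :=
  ∃ T : ComposableArrows (AmbOp C) (d+1), T.obj' (d+1) (by omega) = G ∧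
    (∀ (i : ℕ) (hi : i ≤ d), IsFGProjOp (T.obj' i (by omega))) ∧
    T.Exact ∧ Mono (T.map' 0 1 (by omega) (by omega)) ∧
    Epi (T.map' d (d+1) (by omega) (by omega))

variable (C)

/-- `gldim (mod C) ≤ d`. -/
def GldimLE (d : ℕ) : Prop :=
  ∀ F : AmbC C, IsFinitelyPresented F → PdimLE F d

/-- `gldim (mod Cᵒᵖ) ≤ d`. -/
def GldimOpLE (d : ℕ) : Prop :=
  ∀ G : AmbOp C, IsFinitelyPresentedOp G → PdimOpLE G d

variable {C}

/-- `G ∈ mod Cᵒᵖ` is a transpose of `F ∈ mod C`: for some morphism `f : X ⟶ Y` of `C`,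
`F` is the cokernel of `C(-,f)` and `G` is the cokernel of `C(f,-)`. -/
def IsTransposeOf (G : AmbOp C) (F : AmbC C) : Prop :=
  ∃ (X Y : C) (f : X ⟶ Y) (p : preadditiveYoneda.obj Y ⟶ F)
    (q : preadditiveCoyoneda.obj (op X) ⟶ G),
      IsCokernelπ (preadditiveYoneda.map f) p ∧
      IsCokernelπ (preadditiveCoyoneda.map f.op) q

/-- A partial projective resolution `P_{m} → ⋯ → P_0 → G` in `mod Cᵒᵖ`. -/
def IsPartialProjResolutionOp {m : ℕ} (R : ComposableArrows (AmbOp C) (m+1))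
    (G : AmbOp C) : Prop :=
  R.obj' (m+1) (by omega) = G ∧
  (∀ (j : ℕ) (hj : j ≤ m), IsFGProjOp (R.obj' j (by omega))) ∧
  R.Exact ∧ Epi (R.map' m (m+1) (by omega) (by omega))

/-- A partial projective resolution `P_{m} → ⋯ → P_0 → F` in `mod C`. -/
def IsPartialProjResolutionC {m : ℕ} (R : ComposableArrows (AmbC C) (m+1))
    (F : AmbC C) : Prop :=
  R.obj' (m+1) (by omega) = F ∧
  (∀ (j : ℕ) (hj : j ≤ m), IsFGProj (R.obj' j (by omega))) ∧
  R.Exact ∧ Epi (R.map' m (m+1) (by omega) (by omega))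

/-- `F ∈ mod C` is `k`-torsion free: `Ext^i(Tr F, C(X,-)) = 0` for all `1 ≤ i ≤ k` and
all `X ∈ C`, the `Ext` groups being computed from a projective resolution of a transpose
`Tr F` in `mod Cᵒᵖ`. -/
def IsTorsionFree (F : AmbC C) (k : ℕ) : Prop :=
  ∃ G : AmbOp C, IsTransposeOf G F ∧
    ∀ i : ℕ, 1 ≤ i → i ≤ k →
      ∃ R : ComposableArrows (AmbOp C) (i+2), IsPartialProjResolutionOp R G ∧
        ∀ X : C, ExtVanishesAt (R.map' 0 1 (by omega) (by omega))
          (R.map' 1 2 (by omega) (by omega)) (preadditiveCoyoneda.obj (op X))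

/-- `G ∈ mod Cᵒᵖ` is `k`-torsion free: `Ext^i(Tr G, C(-,X)) = 0` for all `1 ≤ i ≤ k` and
all `X ∈ C`. -/
def IsTorsionFreeOp (G : AmbOp C) (k : ℕ) : Prop :=
  ∃ F : AmbC C, IsTransposeOf G F ∧
    ∀ i : ℕ, 1 ≤ i → i ≤ k →
      ∃ R : ComposableArrows (AmbC C) (i+2), IsPartialProjResolutionC R F ∧
        ∀ X : C, ExtVanishesAt (R.map' 0 1 (by omega) (by omega))
          (R.map' 1 2 (by omega) (by omega)) (preadditiveYoneda.obj X)

end Paper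

open Paper


namespace Freyd

open CategoryTheory CategoryTheory.Limits Opposite Function Paper

set_option linter.unusedSectionVars false

universe u

variable {C : Type u} [Category.{u} C] [Preadditive C]

/-- Elementwise naturality. -/
lemma nat_app {F G : AmbC C} (α : F ⟶ G) {W V : Cᵒᵖ} (θ : W ⟶ V) (x : F.obj W) :
    α.app V (F.map θ x) = G.map θ (α.app W x) := by
  have h := α.naturality θ
  exact ConcreteCategory.congr_hom h x

lemma comp_app {F G H : AmbC C} (α : F ⟶ G) (β : G ⟶ H) (W : Cᵒᵖ) (x : F.obj W) :
    (α ≫ β).app W x = β.app W (α.app W x) := rfl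

lemma natTrans_ext' {F G : AmbC C} {α β : F ⟶ G} (h : ∀ W x, α.app W x = β.app W x) :
    α = β := by
  ext W x
  exact h W x

/-- A subfunctor given by a compatible family of subgroups. -/
structure Subfunctor (F : AmbC C) where
  S : ∀ W : Cᵒᵖ, AddSubgroup (F.obj W)
  compat : ∀ {W V : Cᵒᵖ} (θ : W ⟶ V) {x : F.obj W}, x ∈ S W → F.map θ x ∈ S V

/-- Quotient of a functor by a subfunctor, computed pointwise. -/
def Subfunctor.quot {F : AmbC C} (T : Subfunctor F) : AmbC C where
  obj W := AddCommGrpCat.of (F.obj W ⧸ T.S W)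
  map {W V} θ := AddCommGrpCat.ofHom
    (QuotientAddGroup.map _ _ (F.map θ).hom (fun x hx => T.compat θ hx))
  map_id W := by
    ext x
    simp [AddCommGrpCat.ofHom, QuotientAddGroup.map_mk']
  map_comp {W V U} θ₁ θ₂ := by
    ext x
    simp [AddCommGrpCat.ofHom, QuotientAddGroup.map_mk']
    rfl

/-- The projection onto the quotient. -/
def Subfunctor.π {F : AmbC C} (T : Subfunctor F) : F ⟶ T.quot where
  app W := AddCommGrpCat.ofHom (QuotientAddGroup.mk' (T.S W))
  naturality {W V} θ := by
    ext x
    simp [Subfunctor.quot, AddCommGrpCat.ofHom, QuotientAddGroup.map_mk']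
    rfl

lemma Subfunctor.π_surjective {F : AmbC C} (T : Subfunctor F) (W : Cᵒᵖ) :
    Surjective (T.π.app W) := QuotientAddGroup.mk'_surjective _

lemma Subfunctor.π_eq_zero_iff {F : AmbC C} (T : Subfunctor F) (W : Cᵒᵖ) (x : F.obj W) :
    T.π.app W x = 0 ↔ x ∈ T.S W := QuotientAddGroup.eq_zero_iff x

/-- The pointwise range of a natural transformation, as a subfunctor of the target. -/
def rangeSub {F G : AmbC C} (α : F ⟶ G) : Subfunctor G where
  S W := (α.app W).hom.range
  compat {W V} θ x hx := by
    obtain ⟨y, rfl⟩ := hx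
    exact ⟨F.map θ y, nat_app α θ y⟩

/-- The pointwise kernel of a natural transformation, as a functor. -/
def kerF {F G : AmbC C} (α : F ⟶ G) : AmbC C where
  obj W := AddCommGrpCat.of ((α.app W).hom.ker)
  map {W V} θ := AddCommGrpCat.ofHom <|
    AddMonoidHom.codRestrict ((F.map θ).hom.comp (AddSubgroup.subtype _)) _
      (fun x => by
        have hx : α.app W x.1 = 0 := x.2
        simp only [AddMonoidHom.mem_ker, AddMonoidHom.coe_comp, Function.comp_apply,
          AddSubgroup.coe_subtype]
        rw [nat_app α θ x.1, hx, map_zero])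
  map_id W := by
    ext x
    simp [AddCommGrpCat.ofHom]
  map_comp {W V U} θ₁ θ₂ := by
    ext x
    simp [AddCommGrpCat.ofHom]

/-- The inclusion of the pointwise kernel. -/
def kerι {F G : AmbC C} (α : F ⟶ G) : kerF α ⟶ F where
  app W := AddCommGrpCat.ofHom ((α.app W).hom.ker.subtype)
  naturality {W V} θ := rfl

lemma kerι_injective {F G : AmbC C} (α : F ⟶ G) (W : Cᵒᵖ) :
    Injective ((kerι α).app W) := fun x y h => Subtype.ext h

lemma kerι_comp {F G : AmbC C} (α : F ⟶ G) : kerι α ≫ α = 0 := by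
  ext W x
  exact x.2



/-- Pointwise characterization of being a cokernel projection. -/
def PWCoker {F G Q : AmbC C} (φ : F ⟶ G) (p : G ⟶ Q) : Prop :=
  (∀ W, Surjective (p.app W)) ∧
  ∀ (W : Cᵒᵖ) (x : G.obj W), p.app W x = 0 ↔ ∃ y, φ.app W y = x

lemma app_congr {F G : AmbC C} {α β : F ⟶ G} (h : α = β) (W : Cᵒᵖ) (x : F.obj W) :
    α.app W x = β.app W x :=
  ConcreteCategory.congr_hom (congrArg (fun (γ : F ⟶ G) => γ.app W) h) x

lemma PWCoker.wd {F G Q T : AmbC C} {φ : F ⟶ G} {p : G ⟶ Q} (h : PWCoker φ p)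
    (q : G ⟶ T) (hq : φ ≫ q = 0) {W : Cᵒᵖ} {x y : G.obj W}
    (hxy : p.app W x = p.app W y) : q.app W x = q.app W y := by
  have h0 : p.app W (x - y) = 0 := by rw [map_sub, hxy, sub_self]
  obtain ⟨z, hz⟩ := (h.2 W (x - y)).1 h0
  have h3 : q.app W (x - y) = 0 := by
    rw [← hz]
    simpa using app_congr hq W z
  rw [map_sub] at h3
  exact sub_eq_zero.mp h3

lemma PWCoker.isCokernelπ {F G Q : AmbC C} {φ : F ⟶ G} {p : G ⟶ Q}
    (h : PWCoker φ p) : IsCokernelπ φ p := by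
  constructor
  · ext W y
    exact (h.2 W (φ.app W y)).2 ⟨y, rfl⟩
  · intro T q hq
    have key : ∀ (W : Cᵒᵖ) (x : G.obj W),
        q.app W (surjInv (h.1 W) (p.app W x)) = q.app W x :=
      fun W x => h.wd q hq (surjInv_eq (h.1 W) (p.app W x))
    refine ⟨⟨fun W => AddCommGrpCat.ofHom (AddMonoidHom.mk' (fun z => q.app W (surjInv (h.1 W) z)) ?_), ?_⟩, ?_, ?_⟩
    · intro z z'
      obtain ⟨a, rfl⟩ := h.1 W z
      obtain ⟨b, rfl⟩ := h.1 W z'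
      beta_reduce
      rw [← map_add, key, key, key, map_add]
    · intro W V θ
      ext z
      obtain ⟨g, rfl⟩ := h.1 W z
      have h1 : (Q.map θ) (p.app W g) = p.app V (G.map θ g) := (nat_app p θ g).symm
      simp only [AddCommGrpCat.coe_comp, Function.comp_apply, AddCommGrpCat.hom_ofHom, AddMonoidHom.mk'_apply]
      rw [h1, key, key, nat_app q θ g]
    · ext W g
      exact key W g
    · intro t' ht'
      ext W z
      obtain ⟨g, rfl⟩ := h.1 W z
      have h1 : t'.app W (p.app W g) = q.app W g := app_congr ht' W g
      rw [h1]
      exact (key W g).symm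

lemma IsCokernelπ.pwCoker {F G Q : AmbC C} {φ : F ⟶ G} {p : G ⟶ Q}
    (h : IsCokernelπ φ p) : PWCoker φ p := by
  constructor
  · intro W
    have hπ : p ≫ (rangeSub p).π = 0 := by
      ext V x
      exact ((rangeSub p).π_eq_zero_iff V _).2 ⟨x, rfl⟩
    obtain ⟨t, _, huniq⟩ := h.2 (0 : G ⟶ (rangeSub p).quot) (by simp)
    have h1 : (rangeSub p).π = t := huniq _ (by simpa using hπ)
    have h2 : (0 : Q ⟶ (rangeSub p).quot) = t := huniq _ (by simp)
    intro x
    have h3 : (rangeSub p).π.app W x = 0 := by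
      rw [h1, ← h2]
      rfl
    exact ((rangeSub p).π_eq_zero_iff W x).1 h3
  · intro W x
    constructor
    · intro hx
      have hπ : φ ≫ (rangeSub φ).π = 0 := by
        ext V y
        exact ((rangeSub φ).π_eq_zero_iff V _).2 ⟨y, rfl⟩
      obtain ⟨t, ht, _⟩ := h.2 ((rangeSub φ).π) hπ
      have h4 : (rangeSub φ).π.app W x = t.app W (p.app W x) := (app_congr ht W x).symm
      rw [hx, map_zero] at h4
      exact ((rangeSub φ).π_eq_zero_iff W x).1 h4
    · rintro ⟨y, rfl⟩
      simpa using app_congr h.1 W y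

lemma isCokernelπ_iff_pw {F G Q : AmbC C} (φ : F ⟶ G) (p : G ⟶ Q) :
    IsCokernelπ φ p ↔ PWCoker φ p :=
  ⟨IsCokernelπ.pwCoker, PWCoker.isCokernelπ⟩

lemma isFinitelyPresented_iff (F : AmbC C) : IsFinitelyPresented F ↔
    ∃ (X Y : C) (f : X ⟶ Y) (p : preadditiveYoneda.obj Y ⟶ F),
      PWCoker (preadditiveYoneda.map f) p := by
  unfold IsFinitelyPresented
  exact exists₄_congr (fun X Y f p => isCokernelπ_iff_pw _ _)

lemma yapp {X Y : C} (f : X ⟶ Y) {W : Cᵒᵖ} (h : (preadditiveYoneda.obj X).obj W) :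
    (preadditiveYoneda.map f).app W h = (h : W.unop ⟶ X) ≫ f := rfl

lemma yoneda_elt_eq {Y : C} {F : AmbC C} (α : preadditiveYoneda.obj Y ⟶ F) (W : Cᵒᵖ)
    (g : (preadditiveYoneda.obj Y).obj W) :
    α.app W g = F.map (g : W.unop ⟶ Y).op (α.app (op Y) (𝟙 Y)) := by
  have h := nat_app α ((g : W.unop ⟶ Y).op) (𝟙 Y)
  rw [← h]
  exact congrArg (α.app _) (Category.comp_id (g : W.unop ⟶ Y)).symm

lemma lift_of_surjective {Y₁ Y₂ : C} {G : AmbC C} (p₂ : preadditiveYoneda.obj Y₂ ⟶ G)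
    (hs : ∀ W, Surjective (p₂.app W)) (α : preadditiveYoneda.obj Y₁ ⟶ G) :
    ∃ φ₀ : Y₁ ⟶ Y₂, ∀ (W : Cᵒᵖ) (g : (preadditiveYoneda.obj Y₁).obj W),
      p₂.app W ((preadditiveYoneda.map φ₀).app W g) = α.app W g := by
  obtain ⟨φ₀, hφ₀⟩ := hs (op Y₁) (α.app (op Y₁) (𝟙 Y₁))
  refine ⟨φ₀, fun W g => ?_⟩
  have e1 := yoneda_elt_eq (preadditiveYoneda.map φ₀ ≫ p₂) W g
  have e2 := yoneda_elt_eq α W g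
  have e3 : (preadditiveYoneda.map φ₀ ≫ p₂).app (op Y₁) (𝟙 Y₁) = α.app (op Y₁) (𝟙 Y₁) := by
    show p₂.app (op Y₁) ((𝟙 Y₁) ≫ (φ₀ : Y₁ ⟶ Y₂)) = _
    exact (congrArg (fun z => p₂.app (op Y₁) z) (Category.id_comp (φ₀ : Y₁ ⟶ Y₂))).trans hφ₀
  rw [show p₂.app W ((preadditiveYoneda.map φ₀).app W g)
      = (preadditiveYoneda.map φ₀ ≫ p₂).app W g from rfl, e1, e3, ← e2]

lemma fp_yoneda (Y : C) : IsFinitelyPresented (preadditiveYoneda.obj Y) := by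
  rw [isFinitelyPresented_iff]
  refine ⟨Y, Y, 0, 𝟙 _, fun W => surjective_id, fun W x => ?_⟩
  constructor
  · intro hx
    refine ⟨x, ?_⟩
    erw [yapp, comp_zero]
    exact hx.symm
  · rintro ⟨y, rfl⟩
    erw [yapp, comp_zero]
    rfl

lemma comp_desc [HasBinaryBiproducts C] {W X Y Z : C} (m : W ⟶ X ⊞ Y) (a : X ⟶ Z) (b : Y ⟶ Z) :
    m ≫ biprod.desc a b = (m ≫ biprod.fst) ≫ a + (m ≫ biprod.snd) ≫ b := by
  have hm : m = biprod.lift (m ≫ biprod.fst) (m ≫ biprod.snd) := by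
    apply biprod.hom_ext <;> simp
  conv_lhs => rw [hm]
  rw [biprod.lift_desc]

lemma pw_coker_π {F G : AmbC C} (φ : F ⟶ G) : PWCoker φ (rangeSub φ).π :=
  ⟨(rangeSub φ).π_surjective, fun W x =>
    ((rangeSub φ).π_eq_zero_iff W x).trans (AddMonoidHom.mem_range)⟩

lemma fp_coker [HasBinaryBiproducts C] {F G : AmbC C} (hF : IsFinitelyPresented F)
    (hG : IsFinitelyPresented G) (φ : F ⟶ G) : IsFinitelyPresented ((rangeSub φ).quot) := by
  obtain ⟨X₁, Y₁, f₁, p₁, hp₁⟩ := (isFinitelyPresented_iff F).1 hF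
  obtain ⟨X₂, Y₂, f₂, p₂, hp₂⟩ := (isFinitelyPresented_iff G).1 hG
  obtain ⟨φ₀, hφ₀⟩ := lift_of_surjective p₂ hp₂.1 (p₁ ≫ φ)
  rw [isFinitelyPresented_iff]
  refine ⟨X₂ ⊞ Y₁, Y₂, biprod.desc f₂ φ₀, p₂ ≫ (rangeSub φ).π, fun W =>
    ((rangeSub φ).π_surjective W).comp (hp₂.1 W), fun W g => ?_⟩
  have happ : ∀ x, (p₂ ≫ (rangeSub φ).π).app W x = (rangeSub φ).π.app W (p₂.app W x) :=
    fun x => rfl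
  rw [happ, (rangeSub φ).π_eq_zero_iff]
  simp only [rangeSub]
  rw [AddMonoidHom.mem_range]
  constructor
  · rintro ⟨y, hy⟩
    obtain ⟨a, rfl⟩ := hp₁.1 W y
    have h1 : p₂.app W ((preadditiveYoneda.map φ₀).app W a) = φ.app W (p₁.app W a) := hφ₀ W a
    have h2 : p₂.app W (g - (preadditiveYoneda.map φ₀).app W a) = 0 := by
      rw [map_sub, h1, hy, sub_self]
    obtain ⟨h, hh⟩ := (hp₂.2 W _).1 h2
    refine ⟨biprod.lift h a, ?_⟩
    have h5 : (preadditiveYoneda.map (biprod.desc f₂ φ₀)).app W (biprod.lift h a)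
        = (preadditiveYoneda.map f₂).app W h + (preadditiveYoneda.map φ₀).app W a := by
      erw [yapp, yapp, yapp]
      exact biprod.lift_desc
    rw [h5, hh]
    abel
  · rintro ⟨h', rfl⟩
    have h5 : (preadditiveYoneda.map (biprod.desc f₂ φ₀)).app W h'
        = (preadditiveYoneda.map f₂).app W ((h' : W.unop ⟶ X₂ ⊞ Y₁) ≫ biprod.fst)
          + (preadditiveYoneda.map φ₀).app W ((h' : W.unop ⟶ X₂ ⊞ Y₁) ≫ biprod.snd) := by
      erw [yapp, yapp, yapp]
      exact comp_desc _ f₂ φ₀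
    rw [h5, map_add]
    have h3 : p₂.app W ((preadditiveYoneda.map f₂).app W
        ((h' : W.unop ⟶ X₂ ⊞ Y₁) ≫ biprod.fst)) = 0 :=
      (hp₂.2 W _).2 ⟨(h' : W.unop ⟶ X₂ ⊞ Y₁) ≫ biprod.fst, rfl⟩
    have h4 := hφ₀ W ((h' : W.unop ⟶ X₂ ⊞ Y₁) ≫ biprod.snd)
    rw [h3, zero_add, h4]
    exact ⟨p₁.app W ((h' : W.unop ⟶ X₂ ⊞ Y₁) ≫ biprod.snd), rfl⟩

/-- Factor a transformation through the pointwise kernel. -/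
def kerLift {H F G : AmbC C} (φ : F ⟶ G) (q : H ⟶ F) (hq : q ≫ φ = 0) : H ⟶ kerF φ where
  app W := AddCommGrpCat.ofHom <| AddMonoidHom.codRestrict (q.app W).hom _ (fun x => by
    have := app_congr hq W x
    simpa using this)
  naturality {W V} θ := by
    ext x
    exact Subtype.ext (nat_app q θ x)

lemma kerLift_ι {H F G : AmbC C} (φ : F ⟶ G) (q : H ⟶ F) (hq : q ≫ φ = 0) :
    kerLift φ q hq ≫ kerι φ = q := by ext W x; rfl

lemma fp_ker [HasBinaryBiproducts C] (hwk : HasWeakKernelsP C) {F G : AmbC C}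
    (hF : IsFinitelyPresented F) (hG : IsFinitelyPresented G) (φ : F ⟶ G) :
    IsFinitelyPresented (kerF φ) := by
  obtain ⟨X₁, Y₁, f₁, p₁, hp₁⟩ := (isFinitelyPresented_iff F).1 hF
  obtain ⟨X₂, Y₂, f₂, p₂, hp₂⟩ := (isFinitelyPresented_iff G).1 hG
  obtain ⟨φ₀, hφ₀⟩ := lift_of_surjective p₂ hp₂.1 (p₁ ≫ φ)
  obtain ⟨Xw, w, hwc, hwfac⟩ := hwk (biprod.desc φ₀ (-f₂))
  obtain ⟨Z, w₂, hw₂c, hw₂fac⟩ := hwk (biprod.desc (w ≫ biprod.fst) (-f₁))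
  set u : Xw ⟶ Y₁ := w ≫ biprod.fst with hu
  -- membership in the "preimage kernel"
  have hK' : ∀ (W : Cᵒᵖ) (g : W.unop ⟶ Y₁), φ.app W (p₁.app W g) = 0 ↔
      ∃ v : W.unop ⟶ Xw, v ≫ u = g := by
    intro W g
    have e1 : φ.app W (p₁.app W g) = p₂.app W ((preadditiveYoneda.map φ₀).app W g) :=
      (hφ₀ W g).symm
    rw [e1, hp₂.2 W _]
    constructor
    · rintro ⟨h, hh⟩
      erw [yapp, yapp] at hh
      have hz : biprod.lift (g : W.unop ⟶ Y₁) h ≫ biprod.desc φ₀ (-f₂) = 0 := by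
        erw [biprod.lift_desc, Preadditive.comp_neg, hh]
        abel
      obtain ⟨v, hv⟩ := hwfac _ hz
      refine ⟨v, ?_⟩
      erw [hu, ← Category.assoc, hv, biprod.lift_fst]
    · rintro ⟨v, rfl⟩
      refine ⟨(v ≫ w) ≫ biprod.snd, ?_⟩
      erw [yapp, yapp]
      have hz : (v ≫ w) ≫ biprod.desc φ₀ (-f₂) = 0 := by
        rw [Category.assoc, hwc, comp_zero]
      rw [comp_desc, Preadditive.comp_neg] at hz
      have := sub_eq_zero.mp (by rw [← sub_eq_add_neg] at hz; exact hz)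
      rw [← this, hu]
      simp
      rfl
  have hq0 : (preadditiveYoneda.map u ≫ p₁) ≫ φ = 0 := by
    ext W v
    have : φ.app W (p₁.app W ((v : W.unop ⟶ Xw) ≫ u)) = 0 :=
      (hK' W _).2 ⟨v, rfl⟩
    exact this
  set μ : preadditiveYoneda.obj Xw ⟶ kerF φ := kerLift φ _ hq0 with hμ
  rw [isFinitelyPresented_iff]
  refine ⟨Z, Xw, w₂ ≫ biprod.fst, μ, ?_, ?_⟩
  · -- surjectivity
    intro W x
    have hx : φ.app W x.1 = 0 := x.2
    obtain ⟨g, hg⟩ := hp₁.1 W x.1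
    rw [← hg] at hx
    obtain ⟨v, hv⟩ := (hK' W g).1 hx
    refine ⟨v, Subtype.ext ?_⟩
    show p₁.app W ((v : W.unop ⟶ Xw) ≫ u) = x.1
    rw [hv]
    exact hg
  · -- kernel condition
    intro W v
    have he : μ.app W v = 0 ↔ p₁.app W ((v : W.unop ⟶ Xw) ≫ u) = 0 := by
      constructor
      · intro h
        exact congrArg Subtype.val h
      · intro h
        exact Subtype.ext h
    erw [he, hp₁.2 W _]
    constructor
    · rintro ⟨h, hh⟩
      rw [yapp] at hh
      have hz : biprod.lift (v : W.unop ⟶ Xw) h ≫ biprod.desc u (-f₁) = 0 := by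
        erw [biprod.lift_desc, Preadditive.comp_neg, hh]
        abel
      obtain ⟨t, ht⟩ := hw₂fac _ hz
      refine ⟨t, ?_⟩
      erw [yapp, ← Category.assoc, ht, biprod.lift_fst]
    · rintro ⟨t, rfl⟩
      refine ⟨(t ≫ w₂) ≫ biprod.snd, ?_⟩
      erw [yapp, yapp]
      have hz : (t ≫ w₂) ≫ biprod.desc u (-f₁) = 0 := by
        erw [Category.assoc, hw₂c, comp_zero]
      rw [comp_desc, Preadditive.comp_neg] at hz
      have h6 := sub_eq_zero.mp (by rw [← sub_eq_add_neg] at hz; exact hz)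
      rw [← h6]
      simp
      exact (Category.assoc (t ≫ w₂) biprod.fst u).symm.trans
        (congrArg (· ≫ u) (Category.assoc t w₂ biprod.fst))

instance : Preadditive (ModC C) :=
  inferInstanceAs (Preadditive (ObjectProperty.FullSubcategory (IsFinitelyPresented (C := C))))

lemma modC_zero_eq {Fm Gm : ModC C} : (0 : Fm ⟶ Gm).hom = (0 : Fm.obj ⟶ Gm.obj) := rfl

lemma modC_ext {Fm Gm : ModC C} {f g : Fm ⟶ Gm} (h : f.hom = g.hom) : f = g :=
  ObjectProperty.hom_ext _ h

lemma modC_hom_congr {Fm Gm : ModC C} {f g : Fm ⟶ Gm} (h : f = g) : f.hom = g.hom := by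
  rw [h]

lemma modC_hom_eq_zero {Fm Gm : ModC C} {f : Fm ⟶ Gm} (h : f = 0) : f.hom = 0 := by
  rw [h]; rfl

lemma fp_additive {F : AmbC C} (hF : IsFinitelyPresented F) {W V : Cᵒᵖ} (θ θ' : W ⟶ V)
    (x : F.obj W) : F.map (θ + θ') x = F.map θ x + F.map θ' x := by
  obtain ⟨X, Y, f, p, hp⟩ := (isFinitelyPresented_iff F).1 hF
  obtain ⟨g, rfl⟩ := hp.1 W x
  have e : ∀ (η : W ⟶ V), F.map η (p.app W g) = p.app V ((preadditiveYoneda.obj Y).map η g) :=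
    fun η => (nat_app p η g).symm
  have hyo : (preadditiveYoneda.obj Y).map (θ + θ') g
      = ((preadditiveYoneda.obj Y).map θ) g + ((preadditiveYoneda.obj Y).map θ') g := by
    show (θ + θ').unop ≫ (g : W.unop ⟶ Y) = θ.unop ≫ g + θ'.unop ≫ g
    erw [unop_add, Preadditive.add_comp]
  rw [e, e, e, hyo, map_add]

/-- The morphism `C(-,W) ⟶ F` corresponding to an element of `F.obj (op W)`. -/
def eltHom {F : AmbC C} (hF : IsFinitelyPresented F) {W : Cᵒᵖ} (x : F.obj W) :
    preadditiveYoneda.obj W.unop ⟶ F where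
  app V := AddCommGrpCat.ofHom <| AddMonoidHom.mk' (fun (g : (preadditiveYoneda.obj W.unop).obj V) => F.map (g : V.unop ⟶ W.unop).op x) (fun g g' => by
    have h : ((g + g' : (preadditiveYoneda.obj W.unop).obj V) : V.unop ⟶ W.unop).op
        = (g : V.unop ⟶ W.unop).op + (g' : V.unop ⟶ W.unop).op := rfl
    beta_reduce
    rw [h, fp_additive hF])
  naturality {V V'} θ := by
    ext g
    show F.map ((θ.unop ≫ (g : V.unop ⟶ W.unop)).op) x = F.map θ (F.map _ x)
    erw [op_comp, F.map_comp]
    rfl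

lemma eltHom_app_id {F : AmbC C} (hF : IsFinitelyPresented F) {W : Cᵒᵖ} (x : F.obj W) :
    (eltHom hF x).app W (𝟙 W.unop) = x := by
  show F.map ((𝟙 W.unop : W.unop ⟶ W.unop)).op x = x
  rw [show ((𝟙 W.unop : W.unop ⟶ W.unop)).op = 𝟙 W from rfl, F.map_id]
  rfl

lemma eltHom_comp {F G : AmbC C} (hF : IsFinitelyPresented F) (hG : IsFinitelyPresented G)
    (φ : F ⟶ G) {W : Cᵒᵖ} (x : F.obj W) :
    eltHom hF x ≫ φ = eltHom hG (φ.app W x) := by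
  ext V g
  exact nat_app φ (g : V.unop ⟶ W.unop).op x

lemma eltHom_zero {F : AmbC C} (hF : IsFinitelyPresented F) {W : Cᵒᵖ} :
    eltHom hF (0 : F.obj W) = 0 := by
  ext V g
  show F.map (g : V.unop ⟶ W.unop).op (0 : F.obj W) = _
  rw [map_zero]
  rfl

lemma mono_app_injective {Fm Gm : ModC C} (φ : Fm ⟶ Gm) [Mono φ] (W : Cᵒᵖ) :
    Injective (φ.hom.app W) := by
  have key : ∀ x : Fm.obj.obj W, φ.hom.app W x = 0 → x = 0 := by
    intro x hx
    let Ym : ModC C := ⟨preadditiveYoneda.obj W.unop, fp_yoneda W.unop⟩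
    let a : Ym ⟶ Fm := ObjectProperty.homMk (eltHom Fm.2 x)
    let b : Ym ⟶ Fm := ObjectProperty.homMk (show Ym.obj ⟶ Fm.obj from 0)
    have h1 : a ≫ φ = b ≫ φ := by
      apply ObjectProperty.hom_ext
      show eltHom Fm.2 x ≫ φ.hom
          = (0 : Ym.obj ⟶ Fm.obj) ≫ φ.hom
      rw [eltHom_comp Fm.2 Gm.2, hx, eltHom_zero, zero_comp]
    have h2 : eltHom Fm.2 x = (0 : Ym.obj ⟶ Fm.obj) :=
      congrArg InducedCategory.Hom.hom ((cancel_mono φ).1 h1)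
    have h3 : (eltHom Fm.2 x).app W (𝟙 W.unop)
        = (0 : Ym.obj ⟶ Fm.obj).app W (𝟙 W.unop) := app_congr h2 W (𝟙 W.unop)
    rw [eltHom_app_id] at h3
    exact h3
  intro x y hxy
  have h4 : φ.hom.app W (x - y) = 0 := by rw [map_sub, hxy, sub_self]
  exact sub_eq_zero.mp (key _ h4)

lemma epi_app_surjective [HasBinaryBiproducts C] {Fm Gm : ModC C} (φ : Fm ⟶ Gm) [Epi φ]
    (W : Cᵒᵖ) : Surjective (φ.hom.app W) := by
  let ψ : Fm.obj ⟶ Gm.obj := φ.hom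
  let Qm : ModC C := ⟨(rangeSub ψ).quot, fp_coker Fm.2 Gm.2 ψ⟩
  let a : Gm ⟶ Qm := ObjectProperty.homMk (rangeSub ψ).π
  let b : Gm ⟶ Qm := ObjectProperty.homMk (show Gm.obj ⟶ Qm.obj from 0)
  have h1 : φ ≫ a = φ ≫ b := by
    apply ObjectProperty.hom_ext
    show ψ ≫ (rangeSub ψ).π = ψ ≫ (0 : Gm.obj ⟶ Qm.obj)
    rw [comp_zero]
    ext V x
    exact ((rangeSub ψ).π_eq_zero_iff V _).2 ⟨x, rfl⟩
  have h2 : (rangeSub ψ).π = (0 : Gm.obj ⟶ Qm.obj) :=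
    congrArg InducedCategory.Hom.hom ((cancel_epi φ).1 h1)
  intro y
  have h3 : (rangeSub ψ).π.app W y = 0 := by rw [h2]; rfl
  exact ((rangeSub ψ).π_eq_zero_iff W y).1 h3

lemma mono_universal {F G T : AmbC C} (φ : F ⟶ G) (hinj : ∀ W, Injective (φ.app W))
    (s : T ⟶ G) (hs : ∀ (W : Cᵒᵖ) (x : T.obj W), ∃ y, φ.app W y = s.app W x) :
    ∃! l : T ⟶ F, l ≫ φ = s := by
  have lift : ∀ (W : Cᵒᵖ) (x : T.obj W), {y : F.obj W // φ.app W y = s.app W x} :=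
    fun W x => ⟨(hs W x).choose, (hs W x).choose_spec⟩
  refine ⟨⟨fun W => AddCommGrpCat.ofHom (AddMonoidHom.mk' (fun x => (lift W x).1) ?_), ?_⟩, ?_, ?_⟩
  · intro x x'
    apply hinj W
    beta_reduce
    rw [(lift W (x + x')).2, map_add, map_add, (lift W x).2, (lift W x').2]
  · intro W V θ
    ext x
    apply hinj V
    show φ.app V ((lift V (T.map θ x)).1) = φ.app V (F.map θ (lift W x).1)
    rw [(lift V (T.map θ x)).2, nat_app φ θ, (lift W x).2, nat_app s θ]
  · ext W x
    exact (lift W x).2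
  · intro m hm
    ext W x
    apply hinj W
    show φ.app W (m.app W x) = φ.app W (lift W x).1
    rw [(lift W x).2, ← app_congr hm W x]
    rfl

section Instances

variable [HasBinaryBiproducts C]

lemma modC_hasKernels (hwk : HasWeakKernelsP C) : HasKernels (ModC C) := by
  constructor
  intro Fm Gm φ
  let ψ : Fm.obj ⟶ Gm.obj := φ.hom
  let Km : ModC C := ⟨kerF ψ, fp_ker hwk Fm.2 Gm.2 ψ⟩
  let ι : Km ⟶ Fm := ObjectProperty.homMk (kerι ψ)
  have w : ι ≫ φ = (0 : Km ⟶ Gm) := by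
    apply ObjectProperty.hom_ext
    rw [modC_zero_eq]
    exact kerι_comp ψ
  refine HasLimit.mk ⟨KernelFork.ofι ι w, KernelFork.IsLimit.ofι ι w ?_ ?_ ?_⟩
  · intro T' s hs
    exact ObjectProperty.homMk (kerLift ψ s.hom (modC_hom_eq_zero hs))
  · intro T' s hs
    apply ObjectProperty.hom_ext
    exact kerLift_ι ψ s.hom (modC_hom_eq_zero hs)
  · intro T' s hs m hm
    apply ObjectProperty.hom_ext
    exact natTrans_ext' (fun W x => Subtype.ext (app_congr (congrArg InducedCategory.Hom.hom hm) W x))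

lemma modC_hasCokernels : HasCokernels (ModC C) := by
  constructor
  intro Fm Gm φ
  let ψ : Fm.obj ⟶ Gm.obj := φ.hom
  let Qm : ModC C := ⟨(rangeSub ψ).quot, fp_coker Fm.2 Gm.2 ψ⟩
  let π : Gm ⟶ Qm := ObjectProperty.homMk (rangeSub ψ).π
  have hcoker := (pw_coker_π ψ).isCokernelπ
  have w : φ ≫ π = (0 : Fm ⟶ Qm) := by
    apply ObjectProperty.hom_ext
    rw [modC_zero_eq]
    exact hcoker.1
  refine HasColimit.mk ⟨CokernelCofork.ofπ π w, CokernelCofork.IsColimit.ofπ π w ?_ ?_ ?_⟩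
  · intro T' s hs
    exact ObjectProperty.homMk (hcoker.2 s.hom
      (by have hs := congrArg InducedCategory.Hom.hom hs; rw [modC_zero_eq] at hs; exact hs)).choose
  · intro T' s hs
    apply ObjectProperty.hom_ext
    exact (hcoker.2 s.hom
      (by have hs := congrArg InducedCategory.Hom.hom hs; rw [modC_zero_eq] at hs; exact hs)).choose_spec.1
  · intro T' s hs m hm
    apply ObjectProperty.hom_ext
    exact (hcoker.2 s.hom
      (by have hs := congrArg InducedCategory.Hom.hom hs; rw [modC_zero_eq] at hs; exact hs)).choose_spec.2
        m.hom (congrArg InducedCategory.Hom.hom hm)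

/-- The pointwise-trivial functor. -/
def zeroF : AmbC C where
  obj _ := AddCommGrpCat.of PUnit
  map _ := 0
  map_id _ := by ext x
  map_comp _ _ := by ext x

instance zeroF_subsingleton (W : Cᵒᵖ) : Subsingleton ((zeroF (C := C)).obj W) :=
  inferInstanceAs (Subsingleton PUnit)

lemma fp_zeroF [HasZeroObject C] : IsFinitelyPresented (zeroF (C := C)) := by
  rw [isFinitelyPresented_iff]
  obtain ⟨Z0, hZ0⟩ := HasZeroObject.zero (C := C)
  let pz : preadditiveYoneda.obj Z0 ⟶ zeroF (C := C) :=
    { app := fun W => 0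
      naturality := fun {_ _} θ => by ext x; exact @Subsingleton.elim _ (zeroF_subsingleton _) _ _ }
  refine ⟨Z0, Z0, 𝟙 Z0, pz,
    fun W x => ⟨hZ0.from_ W.unop, @Subsingleton.elim _ (zeroF_subsingleton _) _ _⟩, fun W g => ?_⟩
  constructor
  · intro _
    refine ⟨g, ?_⟩
    erw [yapp, Category.comp_id]
  · intro _
    exact @Subsingleton.elim _ (zeroF_subsingleton _) _ _

lemma modC_hasTerminal [HasZeroObject C] : HasTerminal (ModC C) := by
  let Tm : ModC C := ⟨zeroF, fp_zeroF⟩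
  haveI : ∀ Fm : ModC C, Unique (Fm ⟶ Tm) := fun Fm =>
    { default := ObjectProperty.homMk (show Fm.obj ⟶ zeroF from
        { app := fun W => 0
          naturality := fun {_ _} θ => by
            ext x
            exact @Subsingleton.elim _ (zeroF_subsingleton _) _ _ })
      uniq := fun a => modC_ext
        (natTrans_ext' (fun W x => @Subsingleton.elim _ (zeroF_subsingleton _) _ _)) }
  exact (IsTerminal.ofUnique Tm).hasTerminal

/-- Pointwise product of two functors. -/
def prodF (F G : AmbC C) : AmbC C where
  obj W := AddCommGrpCat.of (F.obj W × G.obj W)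
  map θ := AddCommGrpCat.ofHom ((F.map θ).hom.prodMap (G.map θ).hom)
  map_id W := by
    ext x
    · exact ConcreteCategory.congr_hom (F.map_id W) x.1
    · exact ConcreteCategory.congr_hom (G.map_id W) x.2
  map_comp θ₁ θ₂ := by
    ext x
    · exact ConcreteCategory.congr_hom (F.map_comp θ₁ θ₂) x.1
    · exact ConcreteCategory.congr_hom (G.map_comp θ₁ θ₂) x.2

def prodFst (F G : AmbC C) : prodF F G ⟶ F where
  app W := AddCommGrpCat.ofHom (AddMonoidHom.fst _ _)
  naturality {W V} θ := by ext x; rfl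

def prodSnd (F G : AmbC C) : prodF F G ⟶ G where
  app W := AddCommGrpCat.ofHom (AddMonoidHom.snd _ _)
  naturality {W V} θ := by ext x; rfl

def prodLift {T F G : AmbC C} (α : T ⟶ F) (β : T ⟶ G) : T ⟶ prodF F G where
  app W := AddCommGrpCat.ofHom ((α.app W).hom.prod (β.app W).hom)
  naturality {W V} θ := by
    ext x
    exact Prod.ext (nat_app α θ x) (nat_app β θ x)

lemma fp_prod {F G : AmbC C} (hF : IsFinitelyPresented F) (hG : IsFinitelyPresented G) :
    IsFinitelyPresented (prodF F G) := by
  obtain ⟨X₁, Y₁, f₁, p₁, hp₁⟩ := (isFinitelyPresented_iff F).1 hF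
  obtain ⟨X₂, Y₂, f₂, p₂, hp₂⟩ := (isFinitelyPresented_iff G).1 hG
  rw [isFinitelyPresented_iff]
  let p : preadditiveYoneda.obj (Y₁ ⊞ Y₂) ⟶ prodF F G :=
    prodLift (preadditiveYoneda.map biprod.fst ≫ p₁) (preadditiveYoneda.map biprod.snd ≫ p₂)
  have papp : ∀ (W : Cᵒᵖ) (g : (preadditiveYoneda.obj (Y₁ ⊞ Y₂)).obj W),
      p.app W g = (p₁.app W ((g : W.unop ⟶ Y₁ ⊞ Y₂) ≫ biprod.fst),
        p₂.app W ((g : W.unop ⟶ Y₁ ⊞ Y₂) ≫ biprod.snd)) := fun W g => rfl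
  refine ⟨X₁ ⊞ X₂, Y₁ ⊞ Y₂, biprod.map f₁ f₂, p, ?_, ?_⟩
  · intro W x
    obtain ⟨g₁, hg₁⟩ := hp₁.1 W x.1
    obtain ⟨g₂, hg₂⟩ := hp₂.1 W x.2
    refine ⟨biprod.lift g₁ g₂, ?_⟩
    erw [papp]
    refine Prod.ext ?_ ?_
    · show p₁.app W (biprod.lift (g₁ : W.unop ⟶ Y₁) g₂ ≫ biprod.fst) = x.1
      erw [biprod.lift_fst]
      exact hg₁
    · show p₂.app W (biprod.lift (g₁ : W.unop ⟶ Y₁) g₂ ≫ biprod.snd) = x.2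
      erw [biprod.lift_snd]
      exact hg₂
  · intro W g
    constructor
    · intro hg
      rw [papp] at hg
      have h1 : p₁.app W ((g : W.unop ⟶ Y₁ ⊞ Y₂) ≫ biprod.fst) = 0 := congrArg Prod.fst hg
      have h2 : p₂.app W ((g : W.unop ⟶ Y₁ ⊞ Y₂) ≫ biprod.snd) = 0 := congrArg Prod.snd hg
      obtain ⟨h₁, hh₁⟩ := (hp₁.2 W _).1 h1
      obtain ⟨h₂, hh₂⟩ := (hp₂.2 W _).1 h2
      rw [yapp] at hh₁ hh₂
      refine ⟨biprod.lift h₁ h₂, ?_⟩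
      erw [yapp]
      apply biprod.hom_ext
      · erw [Category.assoc, biprod.map_fst, ← Category.assoc, biprod.lift_fst, hh₁]
      · erw [Category.assoc, biprod.map_snd, ← Category.assoc, biprod.lift_snd, hh₂]
    · rintro ⟨h, rfl⟩
      erw [yapp, papp]
      refine Prod.ext ?_ ?_
      · show p₁.app W (((h : W.unop ⟶ X₁ ⊞ X₂) ≫ biprod.map f₁ f₂) ≫ biprod.fst) = 0
        erw [Category.assoc, biprod.map_fst, ← Category.assoc]
        exact (hp₁.2 W _).2 ⟨(h : W.unop ⟶ X₁ ⊞ X₂) ≫ biprod.fst, rfl⟩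
      · show p₂.app W (((h : W.unop ⟶ X₁ ⊞ X₂) ≫ biprod.map f₁ f₂) ≫ biprod.snd) = 0
        erw [Category.assoc, biprod.map_snd, ← Category.assoc]
        exact (hp₂.2 W _).2 ⟨(h : W.unop ⟶ X₁ ⊞ X₂) ≫ biprod.snd, rfl⟩

lemma modC_hasBinaryProducts : HasBinaryProducts (ModC C) := by
  haveI : ∀ {X Y : ModC C}, HasLimit (pair X Y) := by
    intro X Y
    let Pm : ModC C := ⟨prodF X.obj Y.obj, fp_prod X.2 Y.2⟩
    refine HasLimit.mk ⟨BinaryFan.mk (P := Pm)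
      (show Pm ⟶ X from ObjectProperty.homMk (prodFst X.obj Y.obj))
      (show Pm ⟶ Y from ObjectProperty.homMk (prodSnd X.obj Y.obj)),
      BinaryFan.isLimitMk (fun s => show s.pt ⟶ Pm from ObjectProperty.homMk (prodLift s.fst.hom s.snd.hom))
        (fun s => modC_ext (natTrans_ext' (fun W x => rfl)))
        (fun s => modC_ext (natTrans_ext' (fun W x => rfl))) ?_⟩
    intro s m h1 h2
    apply ObjectProperty.hom_ext
    exact natTrans_ext' (fun W x => Prod.ext (app_congr (congrArg InducedCategory.Hom.hom h1) W x)
      (app_congr (congrArg InducedCategory.Hom.hom h2) W x))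
  exact hasBinaryProducts_of_hasLimit_pair _

end Instances

section Normal

variable [HasBinaryBiproducts C] [HasZeroObject C]

noncomputable def modC_normalMonoCategory (hwk : HasWeakKernelsP C) :
    IsNormalMonoCategory (ModC C) where
  normalMonoOfMono := fun {Fm Gm} φ hm => by
    haveI := hm
    let ψ : Fm.obj ⟶ Gm.obj := φ.hom
    let Qm : ModC C := ⟨(rangeSub ψ).quot, fp_coker Fm.2 Gm.2 ψ⟩
    let π : Gm ⟶ Qm := ObjectProperty.homMk (rangeSub ψ).π
    have w : φ ≫ π = (0 : Fm ⟶ Qm) := by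
      apply ObjectProperty.hom_ext
      rw [modC_zero_eq]
      exact ((pw_coker_π ψ).isCokernelπ).1
    have huniv : ∀ {T' : ModC C} (s : T' ⟶ Gm), s ≫ π = 0 →
        ∃! l : T'.obj ⟶ Fm.obj, l ≫ ψ = s.hom := by
      intro T' s hs
      have hs := congrArg InducedCategory.Hom.hom hs
      rw [modC_zero_eq] at hs
      refine mono_universal ψ (mono_app_injective φ) s.hom ?_
      intro W x
      have h1 : (rangeSub ψ).π.app W (s.hom.app W x) = 0 := app_congr hs W x
      obtain ⟨y, hy⟩ := ((rangeSub ψ).π_eq_zero_iff W _).1 h1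
      exact ⟨y, hy⟩
    refine ⟨{ Z := Qm, g := π, w := w, isLimit := (KernelFork.IsLimit.ofι φ w
      (fun {T'} s hs => ObjectProperty.homMk (huniv s hs).choose)
      (fun {T'} s hs => modC_ext (huniv s hs).choose_spec.1)
      (fun {T'} s hs m hm' => modC_ext
        ((huniv s hs).choose_spec.2 m.hom (modC_hom_congr hm')))) }⟩

noncomputable def modC_normalEpiCategory (hwk : HasWeakKernelsP C) :
    IsNormalEpiCategory (ModC C) where
  normalEpiOfEpi := fun {Fm Gm} φ he => by
    haveI := he
    let ψ : Fm.obj ⟶ Gm.obj := φ.hom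
    let Km : ModC C := ⟨kerF ψ, fp_ker hwk Fm.2 Gm.2 ψ⟩
    let ι : Km ⟶ Fm := ObjectProperty.homMk (kerι ψ)
    have w : ι ≫ φ = (0 : Km ⟶ Gm) := by
      apply ObjectProperty.hom_ext
      rw [modC_zero_eq]
      exact kerι_comp ψ
    have hcoker : IsCokernelπ (kerι ψ) ψ := by
      refine PWCoker.isCokernelπ ⟨fun W => epi_app_surjective φ W, fun W x => ?_⟩
      constructor
      · intro hx
        exact ⟨⟨x, hx⟩, rfl⟩
      · rintro ⟨y, rfl⟩
        exact y.2
    have huniv : ∀ {T' : ModC C} (s : Fm ⟶ T'), ι ≫ s = 0 →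
        ∃! t : Gm.obj ⟶ T'.obj, ψ ≫ t = s.hom := by
      intro T' s hs
      have hs := congrArg InducedCategory.Hom.hom hs
      rw [modC_zero_eq] at hs
      exact hcoker.2 s.hom hs
    refine ⟨{ W := Km, g := ι, w := w, isColimit := (CokernelCofork.IsColimit.ofπ φ w
      (fun {T'} s hs => ObjectProperty.homMk (huniv s hs).choose)
      (fun {T'} s hs => modC_ext (huniv s hs).choose_spec.1)
      (fun {T'} s hs m hm' => modC_ext
        ((huniv s hs).choose_spec.2 m.hom (modC_hom_congr hm')))) }⟩

noncomputable def abelianOfWeakKernels (hwk : HasWeakKernelsP C) : Abelian (ModC C) := by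
  haveI := modC_hasKernels (C := C) hwk
  haveI := modC_hasCokernels (C := C)
  haveI := modC_hasTerminal (C := C)
  haveI := modC_hasBinaryProducts (C := C)
  haveI : HasFiniteProducts (ModC C) := hasFiniteProducts_of_has_binary_and_terminal
  haveI := modC_normalMonoCategory (C := C) hwk
  haveI := modC_normalEpiCategory (C := C) hwk
  exact {}

end Normal

theorem weakKernels_of_abelian (hab : Abelian (ModC C)) : HasWeakKernelsP C := by
  intro Y Z g
  haveI := hab
  let Ym : ModC C := ⟨preadditiveYoneda.obj Y, fp_yoneda Y⟩
  let Zm : ModC C := ⟨preadditiveYoneda.obj Z, fp_yoneda Z⟩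
  let gh : Ym ⟶ Zm := ObjectProperty.homMk (preadditiveYoneda.map g)
  let K := kernel gh
  let k : K ⟶ Ym := kernel.ι gh
  obtain ⟨X0, Y0, f0, p, hp⟩ := (isFinitelyPresented_iff K.obj).1 K.2
  let q : preadditiveYoneda.obj Y0 ⟶ preadditiveYoneda.obj Y := p ≫ k.hom
  let f : Y0 ⟶ Y := q.app (op Y0) (𝟙 Y0)
  have h2 : q ≫ preadditiveYoneda.map g = 0 := by
    have h1 : k ≫ gh = 0 := kernel.condition gh
    exact natTrans_ext' (fun V v => app_congr (congrArg InducedCategory.Hom.hom h1) V (p.app V v))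
  refine ⟨Y0, f, ?_, ?_⟩
  · have h3 := app_congr h2 (op Y0) (𝟙 Y0)
    exact h3
  · intro W u hu
    let Wm : ModC C := ⟨preadditiveYoneda.obj W, fp_yoneda W⟩
    let uh : Wm ⟶ Ym := ObjectProperty.homMk (preadditiveYoneda.map u)
    have hu0 : uh ≫ gh = 0 := by
      apply ObjectProperty.hom_ext
      rw [modC_zero_eq]
      refine natTrans_ext' (fun V v => ?_)
      show ((v : V.unop ⟶ W) ≫ u) ≫ g = 0
      erw [Category.assoc, hu, comp_zero]
    let v₁ : Wm ⟶ K := kernel.lift gh uh hu0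
    have hv₁ : v₁ ≫ k = uh := kernel.lift_ι gh uh hu0
    obtain ⟨vv, hvv⟩ := hp.1 (op W) (v₁.hom.app (op W) (𝟙 W))
    refine ⟨vv, ?_⟩
    have h5 : q.app (op W) vv = u := by
      have e1 : q.app (op W) vv
          = k.hom.app (op W) (p.app (op W) vv) := rfl
      rw [e1, hvv]
      have hv₁' : (v₁ ≫ k : Wm ⟶ Ym).hom = uh.hom := congrArg InducedCategory.Hom.hom hv₁
      have e2 := app_congr hv₁' (op W) (𝟙 W)
      exact e2.trans (Category.id_comp u)
    have h6 := yoneda_elt_eq q (op W) vv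
    show vv ≫ f = u
    rw [← h5]
    exact h6.symm


end Freyd

/-- An additive idempotent complete category `C` has weak kernels if and only if the
category `mod C` of finitely presented contravariant additive functors is abelian. -/
theorem stmt_6 {C : Type u} [Category.{u} C] [Preadditive C] [HasZeroObject C]
    [HasFiniteBiproducts C] [IsIdempotentComplete C] :
    HasWeakKernelsP C ↔ Nonempty (Abelian (ModC C)) := by
  haveI : HasBinaryBiproducts C := hasBinaryBiproducts_of_finite_biproducts C
  constructor
  · intro hwk
    exact ⟨Freyd.abelianOfWeakKernels hwk⟩
  · rintro ⟨hab⟩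
    exact Freyd.weakKernels_of_abelian hab
end

section
/- Let C be an additive idempotent complete category. If F is a finitely presented contravariant functor on C, then F is projective in mod C if and only if a transpose Tr F is projective in mod C^op. -/
open CategoryTheory CategoryTheory.Limits Opposite

open Paper

namespace Stmt11Aux

open CategoryTheory CategoryTheory.Limits Opposite Paper

universe u

section General

variable {D : Type*} [Category D] [HasZeroMorphisms D]

lemma epi_of_isCokernelπ {A B Q : D} {d : A ⟶ B} {p : B ⟶ Q}
    (h : IsCokernelπ d p) : Epi p := by
  constructor
  intro T a b hab
  have hza : d ≫ (p ≫ a) = 0 := by rw [← Category.assoc, h.1, zero_comp]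
  obtain ⟨t, -, hu⟩ := h.2 (p ≫ a) hza
  rw [hu a rfl, hu b hab.symm]

end General

section Exactness

variable {J : Type u} [Category.{u} J] {A B Q : J ⥤ AddCommGrpCat.{u}}

/-- Pointwise exactness of `A ⟶ B ⟶ Q` when `p : B ⟶ Q` is a cokernel of `d : A ⟶ B`. -/
lemma exact_at_point {d : A ⟶ B} {p : B ⟶ Q} (h : IsCokernelπ d p) (j : J)
    (x : B.obj j) (hx : p.app j x = 0) : ∃ a : A.obj j, d.app j a = x := by
  have hcolim : IsColimit (CokernelCofork.ofπ p h.1) :=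
    CokernelCofork.IsColimit.ofπ p h.1
      (fun {Z'} g' hg' => (h.2 g' hg').choose)
      (fun {Z'} g' hg' => (h.2 g' hg').choose_spec.1)
      (fun {Z'} g' hg' m hm => (h.2 g' hg').choose_spec.2 m hm)
  have hS : (ShortComplex.mk d p h.1).Exact :=
    ShortComplex.exact_of_g_is_cokernel _ hcolim
  have hS' := hS.map ((evaluation J AddCommGrpCat.{u}).obj j)
  rw [ShortComplex.ab_exact_iff] at hS'
  exact hS' x hx

lemma app_surjective_of_epi {d : A ⟶ B} {p : B ⟶ Q} (h : IsCokernelπ d p) (j : J) :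
    Function.Surjective (p.app j) := by
  have : Epi p := epi_of_isCokernelπ h
  have : Epi (p.app j) := inferInstance
  rwa [AddCommGrpCat.epi_iff_surjective] at this

end Exactness

section Yoneda

variable {C : Type u} [Category.{u} C] [Preadditive C]

lemma yapp {Z : C} {F : AmbC C} (r : preadditiveYoneda.obj Z ⟶ F)
    (W : Cᵒᵖ) (g : unop W ⟶ Z) : r.app W g = F.map g.op (r.app (op Z) (𝟙 Z)) := by
  have h := NatTrans.naturality_apply r g.op (𝟙 Z)
  have e : (preadditiveYoneda.obj Z).map g.op (𝟙 Z) = g := Category.comp_id g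
  rw [e] at h
  exact h

lemma coyapp {Z : C} {G : AmbOp C} (r : preadditiveCoyoneda.obj (op Z) ⟶ G)
    (W : C) (g : Z ⟶ W) : r.app W g = G.map g (r.app Z (𝟙 Z)) := by
  have h := NatTrans.naturality_apply r g (𝟙 Z)
  have e : (preadditiveCoyoneda.obj (op Z)).map g (𝟙 Z) = g := Category.id_comp g
  rw [e] at h
  exact h

lemma yoneda_hom_ext {Z : C} {F : AmbC C} (r t : preadditiveYoneda.obj Z ⟶ F)
    (h : r.app (op Z) (𝟙 Z) = t.app (op Z) (𝟙 Z)) : r = t := by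
  ext W (g : (unop W) ⟶ Z)
  rw [yapp r W g, h, ← yapp t W g]

lemma coyoneda_hom_ext {Z : C} {G : AmbOp C} (r t : preadditiveCoyoneda.obj (op Z) ⟶ G)
    (h : r.app Z (𝟙 Z) = t.app Z (𝟙 Z)) : r = t := by
  ext W (g : Z ⟶ W)
  rw [coyapp r W g, h, ← coyapp t W g]

lemma ymap_app {X Y : C} (f : X ⟶ Y) (W : Cᵒᵖ) (g : unop W ⟶ X) :
    (preadditiveYoneda.map f).app W g = g ≫ f := rfl

lemma coymap_app {X Y : C} (f : X ⟶ Y) (W : C) (g : Y ⟶ W) :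
    (preadditiveCoyoneda.map f.op).app W g = f ≫ g := rfl

/-- The key characterization: `F = coker C(-,f)` is a direct summand of a representable
functor iff `f` is von Neumann regular. -/
lemma key_y {X Y : C} (f : X ⟶ Y) {F : AmbC C} {p : preadditiveYoneda.obj Y ⟶ F}
    (hp : IsCokernelπ (preadditiveYoneda.map f) p) :
    IsFGProj F ↔ ∃ g : Y ⟶ X, f ≫ g ≫ f = f := by
  have hepi : Epi p := epi_of_isCokernelπ hp
  constructor
  · rintro ⟨Z, s', r', hsr⟩
    -- lift r' along p
    obtain ⟨a, ha⟩ := app_surjective_of_epi hp (op Z) (r'.app (op Z) (𝟙 Z))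
    have hl : preadditiveYoneda.map a ≫ p = r' := by
      apply yoneda_hom_ext
      show p.app (op Z) ((preadditiveYoneda.map a).app (op Z) (𝟙 Z)) = _
      erw [ymap_app, Category.id_comp]
      exact ha
    set s : F ⟶ preadditiveYoneda.obj Y := s' ≫ preadditiveYoneda.map a with hs
    have hsp : s ≫ p = 𝟙 F := by rw [hs, Category.assoc, hl, hsr]
    -- the element h'
    set h' : Y ⟶ Y := s.app (op Y) (p.app (op Y) (𝟙 Y)) with hh'
    have hfh : f ≫ h' = 0 := by
      have h0 : preadditiveYoneda.map f ≫ p ≫ s = 0 := by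
        rw [← Category.assoc, hp.1, zero_comp]
      have := congrArg (fun φ => φ.app (op X) (𝟙 X)) h0
      simp only at this
      have e1 : (preadditiveYoneda.map f ≫ p ≫ s).app (op X) (𝟙 X)
          = (p ≫ s).app (op X) (𝟙 X ≫ f) := rfl
      rw [e1] at this
      have e2 : (𝟙 X ≫ f) = f := Category.id_comp f
      rw [e2] at this
      have e3 : (p ≫ s).app (op X) f
          = (preadditiveYoneda.obj Y).map f.op ((p ≫ s).app (op Y) (𝟙 Y)) :=
        yapp (p ≫ s) (op X) f
      rw [e3] at this
      have e4 : (p ≫ s).app (op Y) (𝟙 Y) = h' := rfl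
      rw [e4] at this
      have e5 : (preadditiveYoneda.obj Y).map f.op h' = f ≫ h' := rfl
      rw [e5] at this
      exact this
    have hker : p.app (op Y) (𝟙 Y - h') = 0 := by
      have e6 : p.app (op Y) h' = p.app (op Y) (𝟙 Y) := by
        have : (p ≫ s ≫ p).app (op Y) (𝟙 Y) = p.app (op Y) (𝟙 Y) := by
          rw [hsp]; rfl
        exact this
      erw [map_sub, e6, sub_self]
    obtain ⟨g, hg⟩ : ∃ g : Y ⟶ X, g ≫ f = 𝟙 Y - h' := exact_at_point hp (op Y) (𝟙 Y - h') hker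
    refine ⟨g, ?_⟩
    have hgf : g ≫ f = 𝟙 Y - h' := hg
    rw [← Category.assoc, Category.assoc, hgf, Preadditive.comp_sub,
      Category.comp_id, hfh, sub_zero]
  · rintro ⟨g, hg⟩
    set q' : preadditiveYoneda.obj Y ⟶ preadditiveYoneda.obj Y :=
      preadditiveYoneda.map (𝟙 Y - g ≫ f) with hq'
    have hdq : preadditiveYoneda.map f ≫ q' = 0 := by
      apply yoneda_hom_ext
      show (𝟙 X ≫ f) ≫ (𝟙 Y - g ≫ f)
          = (0 : preadditiveYoneda.obj X ⟶ preadditiveYoneda.obj Y).app (op X) (𝟙 X)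
      have hz : (0 : preadditiveYoneda.obj X ⟶ preadditiveYoneda.obj Y).app (op X) (𝟙 X)
          = 0 := rfl
      rw [hz]
      simp [Preadditive.comp_sub, hg]
      rfl
    obtain ⟨t, ht, -⟩ := hp.2 q' hdq
    refine ⟨Y, t, p, ?_⟩
    have : p ≫ t ≫ p = p ≫ 𝟙 F := by
      rw [← Category.assoc, ht, Category.comp_id]
      apply yoneda_hom_ext
      show p.app (op Y) (q'.app (op Y) (𝟙 Y)) = p.app (op Y) (𝟙 Y)
      erw [hq', ymap_app, Category.id_comp, map_sub]
      have : p.app (op Y) (g ≫ f) = 0 := by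
        have h0 : (preadditiveYoneda.map f ≫ p).app (op Y) g = 0 := by
          rw [hp.1]; rfl
        have e : (preadditiveYoneda.map f ≫ p).app (op Y) g
            = p.app (op Y) (g ≫ f) := rfl
        rw [e] at h0
        exact h0
      rw [this, sub_zero]
    exact (cancel_epi p).mp this

/-- Dual characterization for the transpose. -/
lemma key_coy {X Y : C} (f : X ⟶ Y) {G : AmbOp C}
    {q : preadditiveCoyoneda.obj (op X) ⟶ G}
    (hq : IsCokernelπ (preadditiveCoyoneda.map f.op) q) :
    IsFGProjOp G ↔ ∃ g : Y ⟶ X, f ≫ g ≫ f = f := by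
  have hepi : Epi q := epi_of_isCokernelπ hq
  constructor
  · rintro ⟨Z, s', r', hsr⟩
    obtain ⟨a, ha⟩ := app_surjective_of_epi hq Z (r'.app Z (𝟙 Z))
    have hl : preadditiveCoyoneda.map a.op ≫ q = r' := by
      apply coyoneda_hom_ext
      show q.app Z ((preadditiveCoyoneda.map a.op).app Z (𝟙 Z)) = _
      erw [coymap_app, Category.comp_id]
      exact ha
    set s : G ⟶ preadditiveCoyoneda.obj (op X) := s' ≫ preadditiveCoyoneda.map a.op with hs
    have hsq : s ≫ q = 𝟙 G := by rw [hs, Category.assoc, hl, hsr]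
    set h' : X ⟶ X := s.app X (q.app X (𝟙 X)) with hh'
    have hfh : h' ≫ f = 0 := by
      have h0 : preadditiveCoyoneda.map f.op ≫ q ≫ s = 0 := by
        rw [← Category.assoc, hq.1, zero_comp]
      have := congrArg (fun φ => φ.app Y (𝟙 Y)) h0
      simp only at this
      have e1 : (preadditiveCoyoneda.map f.op ≫ q ≫ s).app Y (𝟙 Y)
          = (q ≫ s).app Y (f ≫ 𝟙 Y) := rfl
      rw [e1] at this
      have e2 : (f ≫ 𝟙 Y) = f := Category.comp_id f
      rw [e2] at this
      have e3 : (q ≫ s).app Y f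
          = (preadditiveCoyoneda.obj (op X)).map f ((q ≫ s).app X (𝟙 X)) :=
        coyapp (q ≫ s) Y f
      rw [e3] at this
      have e4 : (q ≫ s).app X (𝟙 X) = h' := rfl
      rw [e4] at this
      have e5 : (preadditiveCoyoneda.obj (op X)).map f h' = h' ≫ f := rfl
      rw [e5] at this
      exact this
    have hker : q.app X (𝟙 X - h') = 0 := by
      have e6 : q.app X h' = q.app X (𝟙 X) := by
        have : (q ≫ s ≫ q).app X (𝟙 X) = q.app X (𝟙 X) := by
          rw [hsq]; rfl
        exact this
      erw [map_sub, e6, sub_self]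
    obtain ⟨g, hg⟩ : ∃ g : Y ⟶ X, f ≫ g = 𝟙 X - h' := exact_at_point hq X (𝟙 X - h') hker
    refine ⟨g, ?_⟩
    have hgf : f ≫ g = 𝟙 X - h' := hg
    rw [← Category.assoc, hgf, Preadditive.sub_comp, Category.id_comp, hfh, sub_zero]
  · rintro ⟨g, hg⟩
    set q' : preadditiveCoyoneda.obj (op X) ⟶ preadditiveCoyoneda.obj (op X) :=
      preadditiveCoyoneda.map (𝟙 X - f ≫ g).op with hq'
    have hdq : preadditiveCoyoneda.map f.op ≫ q' = 0 := by
      apply coyoneda_hom_ext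
      show (𝟙 X - f ≫ g) ≫ (f ≫ 𝟙 Y)
          = (0 : preadditiveCoyoneda.obj (op Y) ⟶ preadditiveCoyoneda.obj (op X)).app Y (𝟙 Y)
      have hz : (0 : preadditiveCoyoneda.obj (op Y) ⟶ preadditiveCoyoneda.obj (op X)).app Y (𝟙 Y)
          = 0 := rfl
      rw [hz]
      simp [Preadditive.sub_comp, hg]
      rfl
    obtain ⟨t, ht, -⟩ := hq.2 q' hdq
    refine ⟨X, t, q, ?_⟩
    have : q ≫ t ≫ q = q ≫ 𝟙 G := by
      rw [← Category.assoc, ht, Category.comp_id]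
      apply coyoneda_hom_ext
      show q.app X (q'.app X (𝟙 X)) = q.app X (𝟙 X)
      erw [hq', coymap_app, Category.comp_id, map_sub]
      have : q.app X (f ≫ g) = 0 := by
        have h0 : (preadditiveCoyoneda.map f.op ≫ q).app X g = 0 := by
          rw [hq.1]; rfl
        have e : (preadditiveCoyoneda.map f.op ≫ q).app X g
            = q.app X (f ≫ g) := rfl
        rw [e] at h0
        exact h0
      rw [this, sub_zero]
    exact (cancel_epi q).mp this

end Yoneda

end Stmt11Aux


/-- A finitely presented functor `F` is projective in `mod C` iff a transpose `Tr F` is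
projective in `mod Cᵒᵖ`. -/
theorem stmt_11 {C : Type u} [Category.{u} C] [Preadditive C] [HasZeroObject C]
    [HasFiniteBiproducts C] [IsIdempotentComplete C]
    (F : AmbC C) (hF : IsFinitelyPresented F) (G : AmbOp C) (hG : IsTransposeOf G F) :
    IsFGProj F ↔ IsFGProjOp G := by
  obtain ⟨X, Y, f, p, q, hp, hq⟩ := hG
  rw [Stmt11Aux.key_y f hp, Stmt11Aux.key_coy f hq]
end
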